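/- arXiv:1310.6898 — 6 statements merged into one kernel-verified Lean document; each statement's English description precedes it below -/
import Mathlib

section
/- Let f : [0,1] → [0,1]² be any continuous surjection. Then there exists a closed set N ⊆ [0,1] with H¹(N) = 0 and H¹(f(N)) > 0. -/
open MeasureTheory Set

lemma seg_isometry (t : ℝ) :
    Isometry (fun y : ℝ => (WithLp.equiv 2 (Fin 2 → ℝ)).symm ![t, y]) := by
  apply Isometry.of_dist_eq
  intro a b
  rw [EuclideanSpace.dist_eq]
  simp [Fin.sum_univ_two, Real.dist_eq, ← Real.sqrt_sq_eq_abs]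

/-- any continuous surjection from `[0,1]` onto the unit square `[0,1]²`
(with the Euclidean metric) maps some closed `H¹`-null subset of `[0,1]` to a set of
positive `H¹`-measure. -/
theorem statement_0
    (f : ℝ → EuclideanSpace ℝ (Fin 2))
    (hf : ContinuousOn f (Set.Icc 0 1))
    (hsurj : f '' Set.Icc 0 1 =
      {y : EuclideanSpace ℝ (Fin 2) | ∀ i, y i ∈ Set.Icc (0 : ℝ) 1}) :
    ∃ N, N ⊆ Set.Icc (0 : ℝ) 1 ∧ IsClosed N ∧ μH[1] N = 0 ∧ 0 < μH[1] (f '' N) := by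
  set N : ℝ → Set ℝ := fun t => Set.Icc 0 1 ∩ (fun x => f x 0) ⁻¹' {t} with hN
  have hclosed : ∀ t, IsClosed (N t) := by
    intro t
    exact ContinuousOn.preimage_isClosed_of_isClosed
      ((continuous_apply (0 : Fin 2)).comp_continuousOn ((PiLp.continuous_ofLp 2 _).comp_continuousOn hf)) isClosed_Icc isClosed_singleton
  have hdisj : Pairwise (Function.onFun Disjoint N) := by
    intro s t hst
    simp only [Function.onFun, hN, Set.disjoint_left]
    rintro x ⟨-, hx1⟩ ⟨-, hx2⟩
    exact hst (hx1.symm.trans hx2)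
  -- only countably many fibers have positive measure
  have hcount : Set.Countable {t : ℝ | 0 < μH[1] (N t)} := by
    rw [MeasureTheory.hausdorffMeasure_real]
    exact MeasureTheory.Measure.countable_meas_pos_of_disjoint_iUnion
      (fun t => (hclosed t).measurableSet) hdisj
  -- pick t in [0,1] outside that countable set
  obtain ⟨t, ht, htpos⟩ : ∃ t ∈ Set.Icc (0 : ℝ) 1, ¬ 0 < μH[1] (N t) := by
    by_contra h
    push_neg at h
    have hsub : Set.Icc (0 : ℝ) 1 ⊆ {t : ℝ | 0 < μH[1] (N t)} := fun t ht => h t ht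
    have : (Set.Icc (0 : ℝ) 1).Countable := hcount.mono hsub
    have := this.measure_zero (volume : Measure ℝ)
    rw [Real.volume_Icc] at this
    norm_num at this
  refine ⟨N t, Set.inter_subset_left, hclosed t, by simpa using htpos, ?_⟩
  -- the image contains the vertical segment {t} × [0,1]
  set g : ℝ → EuclideanSpace ℝ (Fin 2) :=
    fun y => (WithLp.equiv 2 (Fin 2 → ℝ)).symm ![t, y] with hg
  have hseg : g '' Set.Icc 0 1 ⊆ f '' N t := by
    rintro p ⟨y, hy, rfl⟩
    have hp : g y ∈ {y : EuclideanSpace ℝ (Fin 2) | ∀ i, y i ∈ Set.Icc (0 : ℝ) 1} := by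
      intro i
      fin_cases i <;> simpa [hg] using (by assumption : _ ∈ Set.Icc (0:ℝ) 1)
    rw [← hsurj] at hp
    obtain ⟨x, hx, hfx⟩ := hp
    refine ⟨x, ⟨hx, ?_⟩, hfx⟩
    have : f x 0 = g y 0 := by rw [hfx]
    simpa [hg] using this
  have hiso := seg_isometry t
  have hmeas : μH[1] (g '' Set.Icc 0 1) = 1 := by
    rw [hiso.hausdorffMeasure_image (Or.inl zero_le_one),
      MeasureTheory.hausdorffMeasure_real, Real.volume_Icc]
    norm_num
  calc (0 : ENNReal) < 1 := zero_lt_one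
    _ = μH[1] (g '' Set.Icc 0 1) := hmeas.symm
    _ ≤ μH[1] (f '' N t) := measure_mono hseg
end

section
/- Let (Y, ν) be a measure space, let 𝒞 and 𝒜 be collections of subsets of Y, and let κ ≥ ℵ₀ be a cardinal such that: (a) Y ∈ 𝒜; (b) Y cannot be written as a union of κ-many sets in 𝒜 each of finite ν-measure; (c) for every family (C_j)_{j∈J} of sets in 𝒞 with |J| ≤ κ, both ⋃_{j∈J} C_j and Y \ ⋃_{j∈J} C_j belong to 𝒜; (d) whenever A ∈ 𝒜 has ν(A) = ∞, there exists C ∈ 𝒞 with C ⊆ A and 0 < ν(C) < ∞. Then there exists a family of pairwise disjoint sets in 𝒞, each of positive ν-measure, whose cardinality is strictly larger than κ. -/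
open MeasureTheory Set Filter Topology
open scoped NNReal ENNReal

universe u v

/-- A Hausdorff (gauge) function `h : [0,∞) → [0,∞]`: nondecreasing, right-continuous,
and positive on positive arguments. -/
structure IsHausdorffFunction (h : ℝ≥0 → ℝ≥0∞) : Prop where
  mono : Monotone h
  right_continuous : ∀ t : ℝ≥0, ContinuousWithinAt h (Set.Ici t) t
  pos : ∀ t : ℝ≥0, 0 < t → 0 < h t

/-- `h` is of finite order: `limsup_{t→0+} h(3t)/h(t) < ∞`. -/
def FiniteOrder (h : ℝ≥0 → ℝ≥0∞) : Prop :=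
  Filter.limsup (fun t : ℝ≥0 => h (3 * t) / h t) (nhdsWithin 0 (Set.Ioi 0)) < ⊤

/-- The Hausdorff (outer) measure built from the gauge `h`:
`H^h(E) = sup_{δ>0} inf { Σ h(diam Uᵢ) : E ⊆ ⋃ Uᵢ, diam Uᵢ ≤ δ }`. -/
noncomputable def hausdorffM {Z : Type*} [EMetricSpace Z] (h : ℝ≥0 → ℝ≥0∞) :
    MeasureTheory.OuterMeasure Z :=
  MeasureTheory.OuterMeasure.mkMetric (fun d => h d.toNNReal)

/-- A set `S` is σ-finite with respect to an outer measure `μ` if it is a countable union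
of Carathéodory-measurable sets of finite measure. -/
def SigmaFiniteSet {Z : Type*} (μ : MeasureTheory.OuterMeasure Z) (S : Set Z) : Prop :=
  ∃ A : ℕ → Set Z, (∀ n, μ.IsCaratheodory (A n) ∧ μ (A n) < ⊤) ∧ S = ⋃ n, A n

/-- A metric space has finite structural dimension if for every `ξ > 0` there are `N` and
`δ₀ > 0` such that every set of diameter `δ ≤ δ₀` can be covered by `N` sets of diameter
at most `ξ·δ`. -/
def FiniteStructuralDim (Z : Type*) [EMetricSpace Z] : Prop :=
  ∀ ξ : ℝ≥0, 0 < ξ → ∃ (N : ℕ) (δ₀ : ℝ≥0), 0 < δ₀ ∧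
    ∀ s : Set Z, EMetric.diam s ≤ δ₀ →
      ∃ U : Fin N → Set Z, s ⊆ ⋃ i, U i ∧ ∀ i, EMetric.diam (U i) ≤ ξ * EMetric.diam s

/-- Property (H) for a subspace `Y` of the complete separable metric space `Z`. -/
structure PropertyH {Z : Type*} [MetricSpace Z] (Y : Set Z) (h : ℝ≥0 → ℝ≥0∞) : Prop where
  complete : CompleteSpace Z
  separable : TopologicalSpace.SeparableSpace Z
  analytic : MeasureTheory.AnalyticSet Y
  hausdorff : IsHausdorffFunction h
  cont : Continuous h
  zero : h 0 = 0
  alt : FiniteOrder h ∨ FiniteStructuralDim Z ∨ ∀ x y z : Z, dist x z ≤ max (dist x y) (dist y z)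

/-- Property (H∞): property (H) together with non-σ-finiteness of `Y` w.r.t. `H^h`. -/
def PropertyHInf {Z : Type*} [MetricSpace Z] (Y : Set Z) (h : ℝ≥0 → ℝ≥0∞) : Prop :=
  PropertyH Y h ∧ ¬ SigmaFiniteSet (hausdorffM h) Y

/-- Property (Aκ): `X` is a union of κ-many measurable sets of finite measure, and
κ-many null sets always union to a null set. -/
def PropertyA {X : Type u} (μ : MeasureTheory.OuterMeasure X) (κ : Cardinal.{u}) : Prop :=
  (∃ (ι : Type u) (A : ι → Set X), Cardinal.mk ι = κ ∧ (⋃ i, A i) = Set.univ ∧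
      ∀ i, μ.IsCaratheodory (A i) ∧ μ (A i) < ⊤) ∧
  ∀ (ι : Type u) (A : ι → Set X), Cardinal.mk ι = κ → (∀ i, μ (A i) = 0) → μ (⋃ i, A i) = 0

/-- A set is perfect if it is closed and every open set meeting it meets it in an
infinite set. -/
def PerfectSet {X : Type*} [TopologicalSpace X] (C : Set X) : Prop :=
  IsClosed C ∧ ∀ O : Set X, IsOpen O → (O ∩ C).Nonempty → (O ∩ C).Infinite

/-- The gauge `d ↦ d^s`. -/
noncomputable def sGauge (s : ℝ≥0) : ℝ≥0 → ℝ≥0∞ := fun d => (d : ℝ≥0∞) ^ (s : ℝ)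

/-- Hausdorff–Besicovitch dimension: the supremum of all `s ≥ 0` with `H^{d^s}(E) > 0`. -/
noncomputable def hDim {Z : Type*} [EMetricSpace Z] (E : Set Z) : ℝ≥0∞ :=
  ⨆ (s : ℝ≥0) (_ : 0 < hausdorffM (sGauge s) E), (s : ℝ≥0∞)

/-- existence of many disjoint sets of positive measure. -/
theorem statement_2 {Y : Type u} (ν : MeasureTheory.OuterMeasure Y)
    (𝒞 𝒜 : Set (Set Y)) (κ : Cardinal.{u}) (hκ : Cardinal.aleph0 ≤ κ)
    (ha : Set.univ ∈ 𝒜)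
    (hb : ¬ ∃ (ι : Type u) (A : ι → Set Y), Cardinal.mk ι ≤ κ ∧
        (∀ i, A i ∈ 𝒜 ∧ ν (A i) < ⊤) ∧ (⋃ i, A i) = Set.univ)
    (hc : ∀ (ι : Type u) (C : ι → Set Y), Cardinal.mk ι ≤ κ → (∀ i, C i ∈ 𝒞) →
        (⋃ i, C i) ∈ 𝒜 ∧ (Set.univ \ ⋃ i, C i) ∈ 𝒜)
    (hd : ∀ A ∈ 𝒜, ν A = ⊤ → ∃ C ∈ 𝒞, C ⊆ A ∧ 0 < ν C ∧ ν C < ⊤) :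
    ∃ D : Set (Set Y), D ⊆ 𝒞 ∧ (∀ C ∈ D, 0 < ν C) ∧
      D.Pairwise Disjoint ∧ κ < Cardinal.mk D := by
  classical
  set S : Set (Set Y) := {C | C ∈ 𝒞 ∧ 0 < ν C ∧ ν C < ⊤} with hS
  set P : Set (Set (Set Y)) := {D | D ⊆ S ∧ D.Pairwise Disjoint} with hP
  obtain ⟨D, hDmax⟩ : ∃ D, Maximal (· ∈ P) D := by
    apply zorn_subset
    intro c hcP hchain
    refine ⟨⋃₀ c, ⟨?_, ?_⟩, fun s hs => subset_sUnion_of_mem hs⟩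
    · exact sUnion_subset fun t ht => (hcP ht).1
    · intro x hx y hy hxy
      obtain ⟨a, hac, hxa⟩ := hx
      obtain ⟨b, hbc, hyb⟩ := hy
      rcases hchain.total hac hbc with hab | hba
      · exact (hcP hbc).2 (hab hxa) hyb hxy
      · exact (hcP hac).2 hxa (hba hyb) hxy
  have hDS : D ⊆ S := hDmax.1.1
  have hDdisj : D.Pairwise Disjoint := hDmax.1.2
  refine ⟨D, fun C hC => (hDS hC).1, fun C hC => (hDS hC).2.1, hDdisj, ?_⟩
  by_contra hle
  have hmkD : Cardinal.mk D ≤ κ := le_of_not_gt hle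
  -- the union of D and its complement are in 𝒜
  obtain ⟨hU𝒜, hcompl𝒜⟩ := hc (↥D) Subtype.val hmkD (fun C => (hDS C.2).1)
  set B : Set Y := Set.univ \ ⋃ (C : ↥D), (C : Set Y) with hB
  -- B has finite measure, else maximality fails
  have hBfin : ν B < ⊤ := by
    rcases lt_or_eq_of_le (le_top : ν B ≤ ⊤) with h | h
    · exact h
    exfalso
    obtain ⟨C, hC𝒞, hCsub, hCpos, hCfin⟩ := hd B hcompl𝒜 h
    have hCnotmemU : ∀ x ∈ C, x ∉ ⋃ (C : ↥D), (C : Set Y) := fun x hx =>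
      (hCsub hx).2
    have hins : insert C D ∈ P := by
      constructor
      · exact insert_subset ⟨hC𝒞, hCpos, hCfin⟩ hDS
      · refine hDdisj.insert fun b hb hne => ?_
        have hdisj : Disjoint C b := by
          rw [Set.disjoint_left]
          intro x hxC hxb
          exact hCnotmemU x hxC (Set.mem_iUnion.2 ⟨⟨b, hb⟩, hxb⟩)
        exact ⟨hdisj, hdisj.symm⟩
    have hCD : C ∈ D := hDmax.2 hins (Set.subset_insert C D) (Set.mem_insert C D)
    obtain ⟨x, hxC⟩ : C.Nonempty := by
      rcases Set.eq_empty_or_nonempty C with h | h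
      · exfalso; rw [h] at hCpos; simp at hCpos
      · exact h
    exact hCnotmemU x hxC (Set.mem_iUnion.2 ⟨⟨C, hCD⟩, hxC⟩)
  -- build a κ-cover contradicting hb
  apply hb
  refine ⟨Option ↥D, fun o => o.elim B Subtype.val, ?_, ?_, ?_⟩
  · rw [Cardinal.mk_option]
    calc Cardinal.mk D + 1 ≤ κ + κ :=
          add_le_add hmkD (le_trans (by exact_mod_cast Cardinal.one_le_aleph0) hκ)
      _ = κ := Cardinal.add_eq_self hκ
  · rintro (_ | ⟨C, hC⟩)
    · exact ⟨hcompl𝒜, hBfin⟩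
    · refine ⟨?_, (hDS hC).2.2⟩
      have := (hc PUnit (fun _ => C) (by simp; exact le_trans Cardinal.one_le_aleph0 hκ)
        (fun _ => (hDS hC).1)).1
      rwa [Set.iUnion_const] at this
  · ext x
    simp only [Set.mem_iUnion, Set.mem_univ, iff_true]
    by_cases hx : x ∈ ⋃ (C : ↥D), (C : Set Y)
    · obtain ⟨C, hxC⟩ := Set.mem_iUnion.1 hx
      exact ⟨some C, hxC⟩
    · exact ⟨none, Set.mem_univ x, hx⟩
end

section
/- Let κ ≥ ℵ₀ be a cardinal and let (Y, d) be a metric space that contains no dense subset of cardinality at most κ. Then there exists a family of pairwise disjoint closed subsets of Y, of cardinality strictly larger than κ, such that each set in the family has infinite H^h-measure for every Hausdorff function h. -/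
open MeasureTheory Set Filter Topology
open scoped NNReal ENNReal

universe u v

section AuxStmt10

variable {Y : Type*} [MetricSpace Y]

lemma sep_isClosed {C : Set Y} {ε : ℝ} (hε : 0 < ε)
    (hsep : ∀ x ∈ C, ∀ y ∈ C, x ≠ y → ε ≤ dist x y) : IsClosed C := by
  rw [← closure_eq_iff_isClosed]
  refine Subset.antisymm (fun x hx => ?_) subset_closure
  by_contra hxC
  obtain ⟨y, hyC, hy⟩ := Metric.mem_closure_iff.1 hx (ε/4) (by linarith)
  have hxy : 0 < dist x y := dist_pos.2 (fun h => hxC (h ▸ hyC))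
  obtain ⟨z, hzC, hz⟩ := Metric.mem_closure_iff.1 hx (min (ε/4) (dist x y)) (by positivity)
  have hzy : z ≠ y := by
    intro h
    rw [h] at hz
    exact absurd (lt_of_lt_of_le hz (min_le_right _ _)) (lt_irrefl _)
  have h1 : ε ≤ dist z y := hsep z hzC y hyC hzy
  have h2 : dist z y ≤ dist z x + dist x y := dist_triangle _ _ _
  have h3 : dist z x < ε/4 := by rw [dist_comm]; exact lt_of_lt_of_le hz (min_le_left _ _)
  linarith [hy, dist_comm x y ▸ hy]

lemma sep_mkMetric {C : Set Y} {ε : ℝ} (hε : 0 < ε)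
    (hsep : ∀ x ∈ C, ∀ y ∈ C, x ≠ y → ε ≤ dist x y)
    (hunc : ¬ C.Countable) (m : ℝ≥0∞ → ℝ≥0∞) :
    MeasureTheory.OuterMeasure.mkMetric m C = ⊤ := by
  set r : ℝ≥0∞ := ENNReal.ofReal (ε/2) with hr
  have hr0 : 0 < r := ENNReal.ofReal_pos.2 (by linarith)
  have hpre : OuterMeasure.mkMetric'.pre (fun s => m (EMetric.diam s)) r C = ⊤ := by
    rw [OuterMeasure.mkMetric'.pre, OuterMeasure.boundedBy_apply]
    refine eq_top_iff.2 (le_iInf₂ fun t ht => ?_)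
    have : ∃ i, ¬ EMetric.diam (t i) ≤ r := by
      by_contra hall
      push_neg at hall
      apply hunc
      have : C ⊆ ⋃ i, (t i ∩ C) := by
        intro x hx
        obtain ⟨_, ⟨i, rfl⟩, hxi⟩ := ht hx
        exact mem_iUnion.2 ⟨i, hxi, hx⟩
      refine Countable.mono this (countable_iUnion fun i => Set.Subsingleton.countable ?_)
      intro a ⟨hat, haC⟩ b ⟨hbt, hbC⟩
      by_contra hab
      have h1 : ε ≤ dist a b := hsep a haC b hbC hab
      have h2 : edist a b ≤ r := le_trans (EMetric.edist_le_diam_of_mem hat hbt) (hall i)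
      have := (edist_le_ofReal (by linarith : (0:ℝ) ≤ ε/2)).1 h2
      linarith
    obtain ⟨i, hi⟩ := this
    have hne : (t i).Nonempty := by
      rcases (t i).eq_empty_or_nonempty with h | h
      · exact absurd (by rw [h]; show Metric.ediam (∅ : Set Y) ≤ r; simp : EMetric.diam (t i) ≤ r) hi
      · exact h
    calc (⊤ : ℝ≥0∞) = ⨆ _ : (t i).Nonempty,
          extend (fun s (_ : EMetric.diam s ≤ r) => m (EMetric.diam s)) (t i) := by
          rw [iSup_pos hne, extend_eq_top (P := fun s => EMetric.diam s ≤ r) (fun s _ => m (EMetric.diam s)) hi]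
      _ ≤ _ := ENNReal.le_tsum i
  refine eq_top_iff.2 ?_
  calc (⊤ : ℝ≥0∞) = OuterMeasure.mkMetric'.pre (fun s => m (EMetric.diam s)) r C := hpre.symm
    _ ≤ OuterMeasure.mkMetric m C := by
        refine (MeasureTheory.OuterMeasure.le_mkMetric m _ r hr0 fun s hs => ?_) C
        exact OuterMeasure.mkMetric'.pre_le hs


lemma sep_exists_big {Y : Type u} [MetricSpace Y] (κ : Cardinal.{u})
    (hκ : Cardinal.aleph0 ≤ κ)
    (hdense : ∀ D : Set Y, Dense D → κ < Cardinal.mk D) :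
    ∃ ε : ℝ, 0 < ε ∧ ∃ S : Set Y,
      (∀ x ∈ S, ∀ y ∈ S, x ≠ y → ε ≤ dist x y) ∧ κ < Cardinal.mk S := by
  by_contra hcon
  push_neg at hcon
  -- for each n, a maximal (1/(n+1))-separated set
  have hzorn : ∀ n : ℕ, ∃ M : Set Y, Maximal
      (· ∈ {S : Set Y | ∀ x ∈ S, ∀ y ∈ S, x ≠ y → 1/(n+1:ℝ) ≤ dist x y}) M := by
    intro n
    apply zorn_subset
    intro c hcsub hchain
    refine ⟨⋃₀ c, ?_, fun s hs => subset_sUnion_of_mem hs⟩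
    rintro x ⟨s, hs, hxs⟩ y ⟨t, ht, hyt⟩ hxy
    rcases hchain.total hs ht with hst | hts
    · exact hcsub ht x (hst hxs) y hyt hxy
    · exact hcsub hs x hxs y (hts hyt) hxy
  choose M hM using hzorn
  have hMsep : ∀ n, ∀ x ∈ M n, ∀ y ∈ M n, x ≠ y → 1/(n+1:ℝ) ≤ dist x y := fun n => (hM n).1
  -- D is dense
  set D : Set Y := ⋃ n : ULift.{u} ℕ, M n.down with hD
  have hDdense : Dense D := by
    rw [Metric.dense_iff]
    intro x r hr
    obtain ⟨n, hn⟩ := exists_nat_one_div_lt hr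
    by_cases hx : ∃ z ∈ M n, dist x z < 1/(n+1:ℝ)
    · obtain ⟨z, hz, hzd⟩ := hx
      exact ⟨z, Metric.mem_ball'.2 (by rw [dist_comm] at hzd ⊢; exact hzd.trans hn),
        mem_iUnion.2 ⟨ULift.up n, hz⟩⟩
    · exfalso
      push_neg at hx
      have hxM : x ∉ M n := fun h => absurd (hx x h) (by simp; positivity)
      have hins : insert x (M n) ∈ {S : Set Y | ∀ a ∈ S, ∀ b ∈ S, a ≠ b → 1/(n+1:ℝ) ≤ dist a b} := by
        rintro a (rfl | ha) b (rfl | hb) hab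
        · exact absurd rfl hab
        · exact hx b hb
        · rw [dist_comm]; exact hx a ha
        · exact hMsep n a ha b hb hab
      have := (hM n).2 hins (subset_insert _ _) (mem_insert _ _)
      exact hxM this
  -- D has cardinality at most κ
  have hDcard : Cardinal.mk D ≤ κ := by
    calc Cardinal.mk D ≤ Cardinal.mk (ULift.{u} ℕ) * ⨆ n : ULift.{u} ℕ, Cardinal.mk (M n.down) :=
          Cardinal.mk_iUnion_le _
      _ ≤ κ * κ := by
          refine mul_le_mul' ?_ ?_
          · simpa using hκ
          · exact ciSup_le' fun n => hcon (1/(n.down+1:ℝ)) (by positivity) (M n.down) (hMsep n.down)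
      _ = κ := Cardinal.mul_eq_self hκ
  exact absurd (hdense D hDdense) (not_lt.2 hDcard)


end AuxStmt10

/-- Lemma `notSeparable`. -/
theorem statement_10 {Y : Type u} [MetricSpace Y] (κ : Cardinal.{u})
    (hκ : Cardinal.aleph0 ≤ κ)
    (hdense : ∀ D : Set Y, Dense D → κ < Cardinal.mk D) :
    ∃ 𝒟 : Set (Set Y), κ < Cardinal.mk 𝒟 ∧ 𝒟.Pairwise Disjoint ∧
      ∀ C ∈ 𝒟, IsClosed C ∧
        ∀ h : ℝ≥0 → ℝ≥0∞, IsHausdorffFunction h → hausdorffM h C = ⊤ := by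
  obtain ⟨ε, hε, S, hsep, hScard⟩ := sep_exists_big κ hκ hdense
  set c : Cardinal.{u} := Order.succ κ with hc
  have hκc : κ < c := Order.lt_succ κ
  have haleph0c : Cardinal.aleph0 ≤ c := hκ.trans hκc.le
  have hcS : c ≤ Cardinal.mk S := Order.succ_le_of_lt hScard
  set A : Type u := c.out with hA
  have hmkA : Cardinal.mk A = c := Cardinal.mk_out c
  have hAA : Cardinal.mk (A × A) ≤ Cardinal.mk S := by
    rw [Cardinal.mk_prod]
    simp only [Cardinal.lift_id, hmkA]
    rw [Cardinal.mul_eq_self haleph0c]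
    exact hcS
  obtain ⟨f⟩ := Cardinal.le_def _ _ |>.1 hAA
  set g : A → A → Y := fun i j => (f (i, j) : Y) with hg
  have hginj : ∀ i i' j j', g i j = g i' j' → i = i' ∧ j = j' := by
    intro i i' j j' hgg
    have := f.injective (Subtype.val_injective hgg)
    exact ⟨congrArg Prod.fst this, congrArg Prod.snd this⟩
  have hgS : ∀ i j, g i j ∈ S := fun i j => (f (i, j)).2
  set Cs : A → Set Y := fun i => Set.range (g i) with hCs
  have hCsep : ∀ i, ∀ x ∈ Cs i, ∀ y ∈ Cs i, x ≠ y → ε ≤ dist x y := by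
    rintro i x ⟨j, rfl⟩ y ⟨j', rfl⟩ hxy
    exact hsep _ (hgS i j) _ (hgS i j') hxy
  have hCinj : Function.Injective Cs := by
    intro i i' hii
    have hne : Nonempty A := Cardinal.mk_ne_zero_iff.1
      (by rw [hmkA]; exact (Cardinal.aleph0_pos.trans_le haleph0c).ne')
    obtain ⟨j⟩ := hne
    have : g i j ∈ Cs i' := hii ▸ Set.mem_range_self j
    obtain ⟨j', hj'⟩ := this
    exact (hginj i' i j' j hj').1.symm
  refine ⟨Set.range Cs, ?_, ?_, ?_⟩
  · rwa [Cardinal.mk_range_eq Cs hCinj, hmkA]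
  · rintro _ ⟨i, rfl⟩ _ ⟨i', rfl⟩ hne
    rw [Set.disjoint_left]
    rintro x ⟨j, rfl⟩ ⟨j', hj'⟩
    exact hne (congrArg Cs (hginj i' i j' j hj').1.symm)
  · rintro _ ⟨i, rfl⟩
    have hunc : ¬ (Cs i).Countable := by
      intro hcount
      have h1 : Cardinal.mk (Cs i) ≤ Cardinal.aleph0 := by
        rw [Cardinal.mk_le_aleph0_iff, Set.countable_coe_iff]
        exact hcount
      have h2 : Cardinal.mk (Cs i) = c := by
        rw [hCs]
        have : Function.Injective (g i) := fun j j' hjj => (hginj i i j j' hjj).2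
        rw [Cardinal.mk_range_eq _ this, hmkA]
      rw [h2] at h1
      exact absurd (h1.trans hκ) (not_le.2 hκc)
    refine ⟨sep_isClosed hε (hCsep i), fun h _ => ?_⟩
    exact sep_mkMetric hε (hCsep i) hunc (fun d => h d.toNNReal)
end

section
/- Let κ ≥ ℵ₀ be a cardinal. Suppose (X, μ) is a measure space satisfying property (Aκ), and suppose (Y, d) is a metric space, with Hausdorff measure H^h for some Hausdorff function h, such that every dense subset of Y has cardinality strictly larger than κ. If f : X → Y is a measurable surjection, then there exists a set N ⊆ X with μ(N) = 0 and H^h(f(N)) > 0. Moreover, if in addition X carries a topology with a countable basis in which points are closed, and f has the property that for every closed set F ⊆ Y the preimage f⁻¹(F) is a countable union of closed sets, then N can be chosen to be perfect. -/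
open MeasureTheory Set Filter Topology
open scoped NNReal ENNReal

universe u v

-- ### Auxiliary lemmas
section Aux
open Cardinal
open Function

lemma aux_inter_iUnion {α : Type*} (m : OuterMeasure α) {s : ℕ → Set α}
    (h : ∀ i, m.IsCaratheodory (s i)) (hd : Pairwise (Disjoint on s)) (t : Set α) :
    m (t ∩ ⋃ i, s i) = ∑' i, m (t ∩ s i) := by
  refine le_antisymm ?_ ?_
  · rw [Set.inter_iUnion]
    exact measure_iUnion_le _
  · rw [ENNReal.tsum_eq_iSup_sum]
    refine iSup_le fun F => ?_
    obtain ⟨n, hn⟩ := F.exists_le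
    calc ∑ i ∈ F, m (t ∩ s i) ≤ ∑ i ∈ Finset.range (n+1), m (t ∩ s i) := by
          refine Finset.sum_le_sum_of_subset fun i hi => ?_
          exact Finset.mem_range.2 (Nat.lt_succ_of_le (hn i hi))
      _ = m (t ∩ ⋃ i < n+1, s i) := m.isCaratheodory_sum h hd
      _ ≤ m (t ∩ ⋃ i, s i) := by
          refine measure_mono (Set.inter_subset_inter_right _ ?_)
          exact Set.iUnion₂_subset fun i _ => Set.subset_iUnion s i


section Ulam
variable {W : Type*}

lemma ulam_subadd (ν : Set W → ℝ≥0∞) (hmono : Monotone ν)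
    (hadd : ∀ E : ℕ → Set W, Pairwise (Disjoint on E) → ν (⋃ n, E n) = ∑' n, ν (E n))
    (E : ℕ → Set W) : ν (⋃ n, E n) ≤ ∑' n, ν (E n) := by
  rw [← iUnion_disjointed, hadd _ (disjoint_disjointed E)]
  exact ENNReal.tsum_le_tsum fun n => hmono (disjointed_subset E n)

lemma ulam_empty (ν : Set W → ℝ≥0∞) (hmono : Monotone ν) (hfin : ν Set.univ < ⊤)
    (hadd : ∀ E : ℕ → Set W, Pairwise (Disjoint on E) → ν (⋃ n, E n) = ∑' n, ν (E n)) :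
    ν ∅ = 0 := by
  by_contra hne
  have h1 : ν (⋃ _ : ℕ, (∅ : Set W)) = ∑' _ : ℕ, ν (∅ : Set W) :=
    hadd _ (fun i j _ => by simp [Function.onFun])
  rw [Set.iUnion_empty, ENNReal.tsum_const_eq_top_of_ne_zero hne] at h1
  exact absurd (h1 ▸ hmono (Set.subset_univ ∅)) (by simp [hfin.ne])

lemma ulam_countable_null (ν : Set W → ℝ≥0∞) (hmono : Monotone ν) (hfin : ν Set.univ < ⊤)
    (hadd : ∀ E : ℕ → Set W, Pairwise (Disjoint on E) → ν (⋃ n, E n) = ∑' n, ν (E n))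
    (hsing : ∀ x : W, ν {x} = 0) {C : Set W} (hC : C.Countable) : ν C = 0 := by
  rcases C.eq_empty_or_nonempty with rfl | hne
  · exact ulam_empty ν hmono hfin hadd
  · obtain ⟨e, rfl⟩ := Set.Countable.exists_eq_range hC hne
    have h2 : Set.range e = ⋃ n, {e n} := by ext x; simp [eq_comm]
    rw [h2]
    have := ulam_subadd ν hmono hadd (fun n => {e n})
    simpa [hsing] using this

lemma ulam_pair (ν : Set W → ℝ≥0∞) (hmono : Monotone ν) (hfin : ν Set.univ < ⊤)
    (hadd : ∀ E : ℕ → Set W, Pairwise (Disjoint on E) → ν (⋃ n, E n) = ∑' n, ν (E n))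
    {U V : Set W} (hUV : Disjoint U V) : ν (U ∪ V) = ν U + ν V := by
  set E : ℕ → Set W := fun k => if k = 0 then U else if k = 1 then V else ∅ with hE
  have hdisj : Pairwise (Disjoint on E) := by
    intro i j hij
    simp only [Function.onFun, hE]
    split_ifs <;>
      first
        | (exfalso; omega)
        | exact hUV
        | exact hUV.symm
        | simp
  have hunion : (⋃ k, E k) = U ∪ V := by
    ext x
    simp only [Set.mem_iUnion, Set.mem_union, hE]
    constructor
    · rintro ⟨k, hk⟩
      split_ifs at hk with h0 h1
      · exact Or.inl hk
      · exact Or.inr hk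
      · exact absurd hk (Set.notMem_empty x)
    · rintro (hx | hx)
      · exact ⟨0, by simp [hx]⟩
      · exact ⟨1, by simp [hx]⟩
  have := hadd E hdisj
  rw [hunion] at this
  rw [this, tsum_eq_sum (s := {0, 1}) (by
    intro k hk
    simp only [Finset.mem_insert, Finset.mem_singleton] at hk
    push_neg at hk
    simp [hE, hk.1, hk.2, ulam_empty ν hmono hfin hadd])]
  rw [Finset.sum_pair (by norm_num)]
  simp [hE]

lemma ulam (hW : Cardinal.mk W = Cardinal.aleph 1)
    (ν : Set W → ℝ≥0∞) (hmono : Monotone ν) (hfin : ν Set.univ < ⊤)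
    (hadd : ∀ E : ℕ → Set W, Pairwise (Disjoint on E) → ν (⋃ n, E n) = ∑' n, ν (E n))
    (hsing : ∀ x : W, ν {x} = 0) : ν Set.univ = 0 := by
  by_contra hc
  obtain ⟨r, wo, hr⟩ := Cardinal.ord_eq W
  have hseg : ∀ y : W, ({x | r x y} : Set W).Countable := by
    intro y
    rw [← Set.countable_coe_iff, ← Cardinal.mk_le_aleph0_iff]
    have h1 : #{x // r x y} = (Ordinal.typein r y).card := by
      rw [Ordinal.card_typein]
    have h2 : Ordinal.typein r y < (#W).ord := by
      rw [hr]; exact Ordinal.typein_lt_type r y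
    rw [Cardinal.lt_ord, hW] at h2
    have h3 : #{x // r x y} < Cardinal.aleph 1 := h1 ▸ h2
    rw [← Cardinal.succ_aleph0] at h3
    exact Order.lt_succ_iff.mp h3
  have hg : ∀ y : W, ∃ g : {x // r x y} → ℕ, Function.Injective g := by
    intro y
    have : Countable {x // r x y} := Set.countable_coe_iff.mpr (hseg y)
    exact (countable_iff_exists_injective _).mp this
  choose g hginj using hg
  set A : W → ℕ → Set W := fun a n => {b | ∃ hab : r a b, g b ⟨a, hab⟩ = n} with hA
  have hdisj_col : ∀ (n : ℕ) (a a' : W), a ≠ a' → Disjoint (A a n) (A a' n) := by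
    intro n a a' hne
    rw [Set.disjoint_left]
    rintro b ⟨h1, h2⟩ ⟨h1', h2'⟩
    exact hne (congrArg Subtype.val (hginj b (h2.trans h2'.symm)))
  have hdisj_row : ∀ a : W, Pairwise (Disjoint on fun n => A a n) := by
    intro a n m hnm
    rw [Function.onFun, Set.disjoint_left]
    rintro b ⟨h1, h2⟩ ⟨h1', h2'⟩
    exact hnm (h2.symm.trans h2')
  have hrow : ∀ a : W, ∑' n, ν (A a n) = ν Set.univ := by
    intro a
    rw [← hadd _ (hdisj_row a)]
    have hsub : (Set.univ \ ⋃ n, A a n) ⊆ insert a {x | r x a} := by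
      intro b hb
      rcases @trichotomous_of _ r wo.toTrichotomous a b with hab | hab | hab
      · refine absurd (Set.mem_iUnion.2 ⟨g b ⟨a, hab⟩, ?_⟩) hb.2
        simp only [hA, Set.mem_setOf_eq]
        exact ⟨hab, trivial⟩
      · exact Set.mem_insert_iff.2 (Or.inl hab.symm)
      · exact Set.mem_insert_iff.2 (Or.inr hab)
    have hcc : ν (Set.univ \ ⋃ n, A a n) = 0 :=
      ulam_countable_null ν hmono hfin hadd hsing
        (Set.Countable.mono hsub (Set.Countable.insert a (hseg a)))
    have hsplit : (Set.univ : Set W) = (⋃ n, A a n) ∪ (Set.univ \ ⋃ n, A a n) := by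
      simp [Set.union_diff_cancel, Set.subset_univ]
    calc ν (⋃ n, A a n) = ν (⋃ n, A a n) + ν (Set.univ \ ⋃ n, A a n) := by rw [hcc, add_zero]
      _ = ν ((⋃ n, A a n) ∪ (Set.univ \ ⋃ n, A a n)) :=
          (ulam_pair ν hmono hfin hadd disjoint_sdiff_self_right).symm
      _ = ν Set.univ := by rw [← hsplit]
  have hpos : ∀ a : W, ∃ n, ν (A a n) ≠ 0 := by
    intro a
    by_contra hno
    push_neg at hno
    have h4 := hrow a
    simp only [hno, tsum_zero] at h4
    exact hc h4.symm
  choose nn hnn using hpos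
  have hWunc : ¬ (Set.univ : Set W).Countable := by
    rw [Set.countable_univ_iff, ← Cardinal.mk_le_aleph0_iff, hW]
    exact fun hle => absurd (lt_of_lt_of_le Cardinal.aleph0_lt_aleph_one hle) (lt_irrefl _)
  have hfiber : ∃ n₀ : ℕ, ¬ {a : W | nn a = n₀}.Countable := by
    by_contra hno
    push_neg at hno
    refine hWunc ?_
    have huniv : (Set.univ : Set W) = ⋃ n, {a : W | nn a = n} := by ext a; simp
    rw [huniv]
    exact Set.countable_iUnion hno
  obtain ⟨n₀, hP⟩ := hfiber
  have hfiber2 : ∃ k : ℕ, ¬ {a : W | nn a = n₀ ∧ ((k : ℝ≥0∞))⁻¹ < ν (A a n₀)}.Countable := by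
    by_contra hno
    push_neg at hno
    refine hP ?_
    have hsub : {a : W | nn a = n₀} ⊆
        ⋃ k : ℕ, {a : W | nn a = n₀ ∧ ((k : ℝ≥0∞))⁻¹ < ν (A a n₀)} := by
      intro a ha
      obtain ⟨k, hk⟩ := ENNReal.exists_inv_nat_lt (ha ▸ hnn a)
      exact Set.mem_iUnion.2 ⟨k, ha, hk⟩
    exact Set.Countable.mono hsub (Set.countable_iUnion hno)
  obtain ⟨k, hPk⟩ := hfiber2
  have hinf : {a : W | nn a = n₀ ∧ ((k : ℝ≥0∞))⁻¹ < ν (A a n₀)}.Infinite := by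
    intro hfin'
    exact hPk hfin'.countable
  set e := hinf.natEmbedding with he
  have hsum : ν (⋃ j, A (e j).1 n₀) = ∑' j, ν (A (e j).1 n₀) := by
    refine hadd _ ?_
    intro i j hij
    refine hdisj_col n₀ _ _ ?_
    intro hval
    exact hij (e.injective (Subtype.ext hval))
  have htop : (⊤ : ℝ≥0∞) ≤ ν (⋃ j, A (e j).1 n₀) := by
    rw [hsum]
    have hk0 : ((k : ℝ≥0∞))⁻¹ ≠ 0 := by simp [ENNReal.inv_ne_zero]
    calc (⊤ : ℝ≥0∞) = ∑' _ : ℕ, ((k : ℝ≥0∞))⁻¹ :=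
          (ENNReal.tsum_const_eq_top_of_ne_zero hk0).symm
      _ ≤ ∑' j, ν (A (e j).1 n₀) :=
          ENNReal.tsum_le_tsum fun j => le_of_lt (e j).2.2
  exact absurd (lt_of_le_of_lt (htop.trans (hmono (Set.subset_univ _))) hfin) (by simp)

end Ulam
lemma hausdorffM_pos_of_separated {Y : Type*} [MetricSpace Y] (h : ℝ≥0 → ℝ≥0∞)
    {E R : Set Y} (hRE : R ⊆ E) (hunc : ¬ R.Countable) {ε : ℝ} (hε : 0 < ε)
    (hsep : ∀ y ∈ R, ∀ y' ∈ R, y ≠ y' → ε ≤ dist y y') : 0 < hausdorffM h E := by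
  set m : Set Y → ℝ≥0∞ := fun s => h (EMetric.diam s).toNNReal with hm
  set r : ℝ≥0∞ := ENNReal.ofReal ε / 2 with hrdef
  have hε' : (0 : ℝ≥0∞) < ENNReal.ofReal ε := ENNReal.ofReal_pos.2 hε
  have hr0 : 0 < r := ENNReal.half_pos hε'.ne'
  have hrlt : r < ENNReal.ofReal ε := ENNReal.half_lt_self hε'.ne' ENNReal.ofReal_ne_top
  have hpre : OuterMeasure.mkMetric'.pre m r E = ⊤ := by
    rw [OuterMeasure.mkMetric'.pre, OuterMeasure.boundedBy_apply]
    rw [iInf_eq_top]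
    intro t
    rw [iInf_eq_top]
    intro ht
    -- find a bad set in the cover
    have : ∃ n, (t n).Nonempty ∧ ¬ EMetric.diam (t n) ≤ r := by
      by_contra hno
      push_neg at hno
      apply hunc
      rw [Set.countable_iff_exists_injective]
      have hch : ∀ y : R, ∃ n, (y : Y) ∈ t n := by
        intro y
        have := ht (hRE y.2)
        simpa using this
      choose F hF using hch
      refine ⟨F, fun y y' hyy' => ?_⟩
      by_contra hne
      have hysep : ENNReal.ofReal ε ≤ edist (y : Y) (y' : Y) := by
        rw [edist_dist]
        exact ENNReal.ofReal_le_ofReal (hsep y y.2 y' y'.2 (fun hc => hne (Subtype.ext hc)))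
      have hdle : edist (y : Y) (y' : Y) ≤ EMetric.diam (t (F y)) := by
        refine EMetric.edist_le_diam_of_mem (hF y) ?_
        rw [hyy']; exact hF y'
      have hsmall := hno (F y) ⟨(y : Y), hF y⟩
      exact absurd ((hysep.trans hdle).trans hsmall) (not_le.2 hrlt)
    obtain ⟨n, hne, hbig⟩ := this
    refine eq_top_iff.2 (le_trans ?_ (ENNReal.le_tsum n))
    rw [iSup_pos hne]
    exact le_of_eq (MeasureTheory.extend_eq_top
      (P := fun s : Set Y => EMetric.diam s ≤ r) (fun s _ => m s) hbig).symm
  have hle : OuterMeasure.mkMetric'.pre m r ≤ hausdorffM h := by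
    have h1 : OuterMeasure.mkMetric'.pre m r ≤ ⨆ (r' : ℝ≥0∞) (_ : 0 < r'),
        OuterMeasure.mkMetric'.pre m r' := le_iSup₂ (f := fun (r' : ℝ≥0∞) (_ : 0 < r') =>
          OuterMeasure.mkMetric'.pre m r') r hr0
    exact h1
  have := hle E
  rw [hpre, top_le_iff] at this
  rw [show hausdorffM h E = ⊤ from this]
  simp


lemma isClosed_union_cballs {Y : Type*} [MetricSpace Y] {R : Set Y} {ε : ℝ} (hε : 0 < ε)
    (hsep : ∀ y ∈ R, ∀ y' ∈ R, y ≠ y' → ε ≤ dist y y') :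
    IsClosed (⋃ y ∈ R, Metric.closedBall y (ε/6)) := by
  rw [← isOpen_compl_iff, Metric.isOpen_iff]
  intro z hz
  simp only [Set.mem_compl_iff, Set.mem_iUnion, not_exists, Metric.mem_closedBall] at hz
  by_cases hy0 : ∃ y₀ ∈ R, dist z y₀ < ε/2
  · obtain ⟨y₀, hy₀R, hy₀⟩ := hy0
    have hzfar : ε/6 < dist z y₀ := lt_of_not_ge (fun hc => hz y₀ hy₀R hc)
    refine ⟨min (dist z y₀ - ε/6) (ε/6), lt_min (by linarith) (by positivity), ?_⟩
    intro w hw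
    simp only [Metric.mem_ball] at hw
    simp only [Set.mem_compl_iff, Set.mem_iUnion, not_exists, Metric.mem_closedBall]
    intro y hyR hwy
    by_cases hyy0 : y = y₀
    · have h1 : dist w z < dist z y₀ - ε/6 := lt_of_lt_of_le hw (min_le_left _ _)
      have h2 : dist z y₀ ≤ dist z w + dist w y₀ := dist_triangle _ _ _
      rw [dist_comm z w] at h2
      rw [hyy0] at hwy
      linarith
    · have h1 : ε ≤ dist y y₀ := hsep y hyR y₀ hy₀R hyy0
      have h2 : dist y y₀ ≤ dist y w + dist w z + dist z y₀ := dist_triangle4 _ _ _ _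
      have h3 : dist w z < ε/6 := lt_of_lt_of_le hw (min_le_right _ _)
      rw [dist_comm y w] at h2
      linarith
  · push_neg at hy0
    refine ⟨ε/6, by positivity, ?_⟩
    intro w hw
    simp only [Metric.mem_ball] at hw
    simp only [Set.mem_compl_iff, Set.mem_iUnion, not_exists, Metric.mem_closedBall]
    intro y hyR hwy
    have h1 : ε/2 ≤ dist z y := hy0 y hyR
    have h2 : dist z y ≤ dist z w + dist w y := dist_triangle _ _ _
    rw [dist_comm z w] at h2
    linarith

lemma exists_condensation {X : Type*} [tX : TopologicalSpace X] [SecondCountableTopology X]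
    {M : Set X} (hM : ¬ M.Countable) :
    ∃ Λ : Set X, IsClosed Λ ∧ Λ ⊆ closure M ∧ ¬ (M ∩ Λ).Countable ∧
      ∀ O : Set X, IsOpen O → (O ∩ Λ).Nonempty → ¬(O ∩ M ∩ Λ).Countable := by
  classical
  set Λ : Set X := {z | ∀ U : Set X, z ∈ U → IsOpen U → ¬(U ∩ M).Countable} with hΛ
  have hMdiff : (M \ Λ).Countable := by
    set B := TopologicalSpace.countableBasis X with hB
    have hBasis : TopologicalSpace.IsTopologicalBasis B :=
      TopologicalSpace.isBasis_countableBasis X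
    have hBc : B.Countable := TopologicalSpace.countable_countableBasis X
    have hsub : M \ Λ ⊆ ⋃ b ∈ {b ∈ B | (b ∩ M).Countable}, (b ∩ M) := by
      intro z hz
      obtain ⟨hzM, hzΛ⟩ := hz
      simp only [hΛ, Set.mem_setOf_eq, not_forall] at hzΛ
      obtain ⟨U, hzU, hUopen, hUc⟩ := hzΛ
      rw [not_not] at hUc
      obtain ⟨b, hbB, hzb, hbU⟩ := hBasis.exists_subset_of_mem_open hzU hUopen
      refine Set.mem_biUnion ⟨hbB, Set.Countable.mono (Set.inter_subset_inter_left M hbU) hUc⟩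
        ⟨hzb, hzM⟩
    refine Set.Countable.mono hsub ?_
    exact Set.Countable.biUnion (Set.Countable.mono (Set.sep_subset _ _) hBc)
      (fun b hb => hb.2)
  have hMΛ : ¬ (M ∩ Λ).Countable := by
    intro hc
    refine hM ?_
    have : M ⊆ (M ∩ Λ) ∪ (M \ Λ) := by
      intro x hx
      by_cases hxΛ : x ∈ Λ
      · exact Or.inl ⟨hx, hxΛ⟩
      · exact Or.inr ⟨hx, hxΛ⟩
    exact Set.Countable.mono this (hc.union hMdiff)
  refine ⟨Λ, ?_, ?_, hMΛ, ?_⟩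
  · rw [← isOpen_compl_iff, isOpen_iff_forall_mem_open]
    intro z hz
    simp only [Set.mem_compl_iff, hΛ, Set.mem_setOf_eq, not_forall] at hz
    obtain ⟨U, hzU, hUopen, hUc⟩ := hz
    rw [not_not] at hUc
    refine ⟨U, ?_, hUopen, hzU⟩
    intro z' hz'
    simp only [Set.mem_compl_iff, hΛ, Set.mem_setOf_eq, not_forall]
    exact ⟨U, hz', hUopen, not_not.mpr hUc⟩
  · intro z hz
    rw [mem_closure_iff]
    intro O hO hzO
    rcases (O ∩ M).eq_empty_or_nonempty with hemp | hne
    · exact absurd (hemp ▸ Set.countable_empty) (hz O hzO hO)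
    · exact hne
  · intro O hOopen ⟨x, hxO, hxΛ⟩ hc
    have hOM : ¬ (O ∩ M).Countable := hxΛ O hxO hOopen
    refine hOM ?_
    have hsub2 : O ∩ M ⊆ (O ∩ M ∩ Λ) ∪ (M \ Λ) := by
      intro w hw
      by_cases hwΛ : w ∈ Λ
      · exact Or.inl ⟨hw, hwΛ⟩
      · exact Or.inr ⟨hw.2, hwΛ⟩
    exact Set.Countable.mono hsub2 (hc.union hMdiff)
lemma key_separated {X Y : Type u} [MetricSpace Y]
    (μ : MeasureTheory.OuterMeasure X)
    (κ : Cardinal.{u}) (hκ : Cardinal.aleph0 ≤ κ)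
    (hA : PropertyA μ κ)
    (hdense : ∀ D : Set Y, Dense D → κ < Cardinal.mk D)
    (f : X → Y) (hsurj : Function.Surjective f)
    (hmeas : ∀ O : Set Y, IsOpen O → μ.IsCaratheodory (f ⁻¹' O)) :
    ∃ (ε : ℝ) (R : Set Y), 0 < ε ∧ ¬ R.Countable ∧
      (∀ y ∈ R, ∀ y' ∈ R, y ≠ y' → ε ≤ dist y y') ∧
      μ (f ⁻¹' (⋃ y ∈ R, Metric.ball y (ε/3))) = 0 := by
  classical
  obtain ⟨⟨ι, A, hι, hAcover, hAi⟩, hAnull⟩ := hA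
  -- Step 1: maximal separated sets
  have hzorn : ∀ n : ℕ, ∃ S : Set Y,
      Maximal (· ∈ {s : Set Y | ∀ y ∈ s, ∀ y' ∈ s, y ≠ y' → 1/((n:ℝ)+1) ≤ dist y y'}) S := by
    intro n
    apply zorn_subset
    intro c hcsub hchain
    refine ⟨⋃₀ c, ?_, fun s hs => Set.subset_sUnion_of_mem hs⟩
    intro y hy y' hy' hne
    obtain ⟨a, hac, hya⟩ := hy
    obtain ⟨b, hbc, hyb⟩ := hy'
    rcases hchain.total hac hbc with hab | hba
    · exact hcsub hbc y (hab hya) y' hyb hne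
    · exact hcsub hac y hya y' (hba hyb) hne
  choose S hS using hzorn
  have hSsep : ∀ n, ∀ y ∈ S n, ∀ y' ∈ S n, y ≠ y' → 1/((n:ℝ)+1) ≤ dist y y' := fun n => (hS n).1
  -- Step 2: density
  have hdenseD : Dense (⋃ m : ULift.{u} ℕ, S m.down) := by
    rw [Metric.dense_iff]
    intro x rr hrr
    obtain ⟨n, hn⟩ := exists_nat_one_div_lt hrr
    by_cases hx : ∃ y ∈ S n, dist x y < 1/((n:ℝ)+1)
    · obtain ⟨y, hyS, hy⟩ := hx
      refine ⟨y, Metric.mem_ball.2 (by rw [dist_comm]; linarith), Set.mem_iUnion.2 ⟨⟨n⟩, hyS⟩⟩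
    · push_neg at hx
      exfalso
      have hins : insert x (S n) ∈
          {s : Set Y | ∀ y ∈ s, ∀ y' ∈ s, y ≠ y' → 1/((n:ℝ)+1) ≤ dist y y'} := by
        intro y hy y' hy' hne
        rcases hy with rfl | hyS
        · rcases hy' with rfl | hy'S
          · exact absurd rfl hne
          · exact hx y' hy'S
        · rcases hy' with rfl | hy'S
          · rw [dist_comm]; exact hx y hyS
          · exact hSsep n y hyS y' hy'S hne
      have hsub := (hS n).2 hins (Set.subset_insert x (S n))
      have hxS : x ∈ S n := hsub (Set.mem_insert x _)
      have := hx x hxS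
      simp at this
      have : (0:ℝ) < 1/((n:ℝ)+1) := by positivity
      linarith [hx x hxS, dist_self x]
  -- Step 3: some S n has size > κ
  have hbig : ∃ n : ℕ, κ < #(S n) := by
    by_contra hno
    push_neg at hno
    have h1 : #(⋃ m : ULift.{u} ℕ, S m.down) ≤ #(ULift.{u} ℕ) * ⨆ m : ULift.{u} ℕ, #(S m.down) :=
      Cardinal.mk_iUnion_le _
    have h2 : ⨆ m : ULift.{u} ℕ, #(S m.down) ≤ κ := ciSup_le' (fun m => hno m.down)
    have h3 : #(ULift.{u} ℕ) = (Cardinal.aleph0 : Cardinal.{u}) := by simp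
    have h4 : #(⋃ m : ULift.{u} ℕ, S m.down) ≤ κ := by
      refine h1.trans ?_
      rw [h3]
      calc Cardinal.aleph0 * ⨆ m : ULift.{u} ℕ, #(S m.down) ≤ Cardinal.aleph0 * κ :=
            mul_le_mul_right h2 _
        _ = κ := Cardinal.aleph0_mul_eq hκ
    exact absurd (hdense _ hdenseD) (not_lt.2 h4)
  obtain ⟨n, hSn⟩ := hbig
  set ε : ℝ := 1/((n:ℝ)+1) with hεdef
  have hε : 0 < ε := by positivity
  have hsep : ∀ y ∈ S n, ∀ y' ∈ S n, y ≠ y' → ε ≤ dist y y' := hSsep n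
  -- disjointness of the preimages of balls
  have hball_disj : ∀ y ∈ S n, ∀ y' ∈ S n, y ≠ y' →
      Disjoint (f ⁻¹' Metric.ball y (ε/3)) (f ⁻¹' Metric.ball y' (ε/3)) := by
    intro y hy y' hy' hne
    rw [Set.disjoint_left]
    intro z hz hz'
    simp only [Set.mem_preimage, Metric.mem_ball] at hz hz'
    have h1 : ε ≤ dist y y' := hsep y hy y' hy' hne
    have h2 : dist y y' ≤ dist y (f z) + dist (f z) y' := dist_triangle _ _ _
    rw [dist_comm y (f z)] at h2
    linarith
  -- Step 4: bad points
  set Bad : ι → Set Y := fun i => {y ∈ S n | μ (A i ∩ f ⁻¹' Metric.ball y (ε/3)) ≠ 0} with hBad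
  have hBadc : ∀ i, (Bad i).Countable := by
    intro i
    have hsub : Bad i ⊆ ⋃ k : ℕ,
        {y ∈ S n | ((k:ℝ≥0∞))⁻¹ < μ (A i ∩ f ⁻¹' Metric.ball y (ε/3))} := by
      intro y hy
      obtain ⟨k, hk⟩ := ENNReal.exists_inv_nat_lt hy.2
      exact Set.mem_iUnion.2 ⟨k, hy.1, hk⟩
    refine Set.Countable.mono hsub (Set.countable_iUnion fun k => Set.Finite.countable ?_)
    rw [← Set.not_infinite]
    intro hinf
    set e := hinf.natEmbedding with he
    have hdisj : Pairwise (Disjoint on fun j => f ⁻¹' Metric.ball ((e j : Y)) (ε/3)) := by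
      intro j₁ j₂ hj
      exact hball_disj _ (e j₁).2.1 _ (e j₂).2.1
        (fun hc => hj (e.injective (Subtype.ext hc)))
    have hmeas' : ∀ j, μ.IsCaratheodory (f ⁻¹' Metric.ball ((e j : Y)) (ε/3)) :=
      fun j => hmeas _ Metric.isOpen_ball
    have hsum := aux_inter_iUnion μ hmeas' hdisj (A i)
    have htop : (⊤ : ℝ≥0∞) ≤ μ (A i ∩ ⋃ j, f ⁻¹' Metric.ball ((e j : Y)) (ε/3)) := by
      rw [hsum]
      have hk0 : ((k : ℝ≥0∞))⁻¹ ≠ 0 := by simp [ENNReal.inv_ne_zero]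
      calc (⊤ : ℝ≥0∞) = ∑' _ : ℕ, ((k : ℝ≥0∞))⁻¹ :=
            (ENNReal.tsum_const_eq_top_of_ne_zero hk0).symm
        _ ≤ ∑' j, μ (A i ∩ f ⁻¹' Metric.ball ((e j : Y)) (ε/3)) :=
            ENNReal.tsum_le_tsum fun j => le_of_lt (e j).2.2
    have hfin : μ (A i ∩ ⋃ j, f ⁻¹' Metric.ball ((e j : Y)) (ε/3)) ≤ μ (A i) :=
      measure_mono Set.inter_subset_left
    exact absurd (lt_of_le_of_lt (htop.trans hfin) (hAi i).2) (by simp)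
  set BadU : Set Y := ⋃ i, Bad i with hBadU
  have hιne : Nonempty ι := by
    rw [← Cardinal.mk_ne_zero_iff, hι]
    intro hc
    rw [hc] at hκ
    simp at hκ
    exact Cardinal.aleph0_ne_zero hκ
  have hBadUcard : #BadU ≤ κ := by
    have h1 : #BadU ≤ #ι * ⨆ i, #(Bad i) := Cardinal.mk_iUnion_le _
    have h2 : ⨆ i, #(Bad i) ≤ Cardinal.aleph0 := ciSup_le' (fun i => by
      rw [Cardinal.mk_le_aleph0_iff, Set.countable_coe_iff]; exact hBadc i)
    refine h1.trans ?_
    rw [hι]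
    calc κ * ⨆ i, #(Bad i) ≤ κ * Cardinal.aleph0 := mul_le_mul_right h2 _
      _ = κ := Cardinal.mul_aleph0_eq hκ
  -- Step 5: T and R
  have hT : κ < #↑(S n \ BadU) := by
    by_contra hno
    push_neg at hno
    have h1 : #(S n) ≤ #↑(S n \ BadU) + #BadU := by
      refine le_trans (Cardinal.mk_le_mk_of_subset (t := (S n \ BadU) ∪ BadU) ?_)
        (Cardinal.mk_union_le _ _)
      intro y hy
      by_cases hyB : y ∈ BadU
      · exact Or.inr hyB
      · exact Or.inl ⟨hy, hyB⟩
    have h2 : #(S n) ≤ κ := by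
      refine h1.trans ?_
      calc #↑(S n \ BadU) + #BadU ≤ κ + κ := add_le_add hno hBadUcard
        _ = κ := Cardinal.add_eq_self hκ
    exact absurd hSn (not_lt.2 h2)
  have hℵ₁ : (Cardinal.aleph 1 : Cardinal.{u}) ≤ #↑(S n \ BadU) := by
    rw [← Cardinal.succ_aleph0]
    exact Order.succ_le_of_lt (lt_of_le_of_lt hκ hT)
  obtain ⟨R, hRsub, hRcard⟩ := Cardinal.le_mk_iff_exists_subset.mp hℵ₁
  have hRS : R ⊆ S n := fun y hy => (hRsub hy).1
  have hRunc : ¬ R.Countable := by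
    rw [Cardinal.countable_iff_lt_aleph_one, hRcard]
    exact lt_irrefl _
  refine ⟨ε, R, hε, hRunc, fun y hy y' hy' hne => hsep y (hRS hy) y' (hRS hy') hne, ?_⟩
  -- Step 6: Ulam gives nullity on each A i
  have hnull : ∀ i, μ (A i ∩ f ⁻¹' (⋃ y ∈ R, Metric.ball y (ε/3))) = 0 := by
    intro i
    set ν : Set (↥R) → ℝ≥0∞ := fun E =>
      μ (A i ∩ f ⁻¹' (⋃ y : ↥R, ⋃ (_ : y ∈ E), Metric.ball (y : Y) (ε/3))) with hν
    have hmono : Monotone ν := by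
      intro E E' hEE'
      refine measure_mono (Set.inter_subset_inter_right _ (Set.preimage_mono ?_))
      exact Set.iUnion_mono fun y => Set.iUnion_mono' fun hy => ⟨hEE' hy, subset_rfl⟩
    have hfin : ν Set.univ < ⊤ := lt_of_le_of_lt (measure_mono Set.inter_subset_left) (hAi i).2
    have hadd : ∀ E : ℕ → Set (↥R), Pairwise (Disjoint on E) →
        ν (⋃ m, E m) = ∑' m, ν (E m) := by
      intro E hE
      have hmeasG : ∀ j, μ.IsCaratheodory
          (f ⁻¹' (⋃ y : ↥R, ⋃ (_ : y ∈ E j), Metric.ball (y : Y) (ε/3))) :=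
        fun j => hmeas _ (isOpen_iUnion fun y => isOpen_iUnion fun _ => Metric.isOpen_ball)
      have hdisjG : Pairwise (Disjoint on fun j =>
          f ⁻¹' (⋃ y : ↥R, ⋃ (_ : y ∈ E j), Metric.ball (y : Y) (ε/3))) := by
        intro j₁ j₂ hj
        rw [Function.onFun, Set.disjoint_left]
        intro z hz hz'
        simp only [Set.mem_preimage, Set.mem_iUnion] at hz hz'
        obtain ⟨y₁, hy₁E, hy₁⟩ := hz
        obtain ⟨y₂, hy₂E, hy₂⟩ := hz'
        have hne : (y₁ : Y) ≠ (y₂ : Y) := by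
          intro hc
          have : y₁ = y₂ := Subtype.ext hc
          subst this
          exact (hE hj).le_bot ⟨hy₁E, hy₂E⟩
        exact (hball_disj _ (hRS y₁.2) _ (hRS y₂.2) hne).le_bot ⟨hy₁, hy₂⟩
      have := aux_inter_iUnion μ hmeasG hdisjG (A i)
      rw [← Set.preimage_iUnion] at this
      rw [hν]
      convert this using 4
      ext z
      simp only [Set.mem_iUnion]
      constructor
      · rintro ⟨y, ⟨m, hym⟩, hz⟩
        exact ⟨m, y, hym, hz⟩
      · rintro ⟨m, y, hym, hz⟩
        exact ⟨y, ⟨m, hym⟩, hz⟩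
    have hsing : ∀ y : ↥R, ν {y} = 0 := by
      intro y
      have h1 : (⋃ y' : ↥R, ⋃ (_ : y' ∈ ({y} : Set ↥R)), Metric.ball (y' : Y) (ε/3))
          = Metric.ball (y : Y) (ε/3) := by
        simp
      rw [hν]
      simp only [h1]
      have hyBad : (y : Y) ∉ BadU := (hRsub y.2).2
      by_contra hc
      exact hyBad (Set.mem_iUnion.2 ⟨i, hRS y.2, hc⟩)
    have := ulam (by rw [hRcard]) ν hmono hfin hadd hsing
    rw [hν] at this
    convert this using 4
    rw [Set.iUnion_coe_set]
    simp
  have hcover : f ⁻¹' (⋃ y ∈ R, Metric.ball y (ε/3)) ⊆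
      ⋃ i, (A i ∩ f ⁻¹' (⋃ y ∈ R, Metric.ball y (ε/3))) := by
    intro z hz
    have : z ∈ ⋃ i, A i := hAcover ▸ Set.mem_univ z
    obtain ⟨i, hi⟩ := Set.mem_iUnion.1 this
    exact Set.mem_iUnion.2 ⟨i, hi, hz⟩
  have := hAnull ι _ hι hnull
  exact le_antisymm (le_trans (measure_mono hcover) (le_of_eq this)) zero_le

end Aux

/-- Theorem `GeneralResultNonSeparable`. -/
theorem statement_11 {X Y : Type u} [MetricSpace Y]
    (μ : MeasureTheory.OuterMeasure X)
    (κ : Cardinal.{u}) (hκ : Cardinal.aleph0 ≤ κ)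
    (hA : PropertyA μ κ)
    (h : ℝ≥0 → ℝ≥0∞) (hh : IsHausdorffFunction h)
    (hdense : ∀ D : Set Y, Dense D → κ < Cardinal.mk D)
    (f : X → Y) (hsurj : Function.Surjective f)
    (hmeas : ∀ O : Set Y, IsOpen O → μ.IsCaratheodory (f ⁻¹' O)) :
    (∃ N : Set X, μ N = 0 ∧ 0 < hausdorffM h (f '' N)) ∧
    (∀ tX : TopologicalSpace X, @SecondCountableTopology X tX →
      @T1Space X tX →
      (∀ F : Set Y, IsClosed F →
        ∃ C : ℕ → Set X, (∀ n, @IsClosed X tX (C n)) ∧ f ⁻¹' F = ⋃ n, C n) →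
      ∃ N : Set X, @PerfectSet X tX N ∧ μ N = 0 ∧ 0 < hausdorffM h (f '' N)) := by
  classical
  obtain ⟨ε, R, hε, hRunc, hRsep, hnull⟩ :=
    key_separated μ κ hκ hA hdense f hsurj hmeas
  constructor
  · refine ⟨f ⁻¹' (⋃ y ∈ R, Metric.ball y (ε/3)), hnull, ?_⟩
    refine hausdorffM_pos_of_separated h ?_ hRunc hε hRsep
    rw [Set.image_preimage_eq _ hsurj]
    intro y hy
    exact Set.mem_biUnion hy (Metric.mem_ball_self (by linarith))
  · intro tX hsc hT1 hFσ
    letI := tX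
    haveI := hsc
    set W' : Set Y := ⋃ y ∈ R, Metric.closedBall y (ε/6) with hW'
    have hW'sub : W' ⊆ ⋃ y ∈ R, Metric.ball y (ε/3) := by
      refine Set.iUnion₂_mono fun y hy => ?_
      intro z hz
      rw [Metric.mem_closedBall] at hz
      exact Metric.mem_ball.2 (lt_of_le_of_lt hz (by linarith))
    have hW'null : μ (f ⁻¹' W') = 0 :=
      le_antisymm (hnull ▸ measure_mono (Set.preimage_mono hW'sub)) zero_le
    have hW'closed : IsClosed W' := isClosed_union_cballs hε hRsep
    obtain ⟨C, hCclosed, hCeq⟩ := hFσ W' hW'closed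
    choose x hx using hsurj
    have hxW : ∀ y ∈ R, x y ∈ f ⁻¹' W' := by
      intro y hy
      simp only [Set.mem_preimage, hx]
      exact Set.mem_biUnion hy (Metric.mem_closedBall_self (by linarith))
    have hfib : ∃ n₀, ¬ {y ∈ R | x y ∈ C n₀}.Countable := by
      by_contra hno
      push_neg at hno
      refine hRunc (Set.Countable.mono ?_ (Set.countable_iUnion hno))
      intro y hy
      have h1 := hxW y hy
      rw [hCeq] at h1
      obtain ⟨m, hm⟩ := Set.mem_iUnion.1 h1
      exact Set.mem_iUnion.2 ⟨m, hy, hm⟩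
    obtain ⟨n₀, hM₀⟩ := hfib
    set M₀ : Set Y := {y ∈ R | x y ∈ C n₀} with hM₀def
    set M : Set X := x '' M₀ with hMdef
    have hMC : M ⊆ C n₀ := by rintro _ ⟨y, hy, rfl⟩; exact hy.2
    have hMunc : ¬ M.Countable := by
      intro hc
      refine hM₀ ?_
      have hsub : M₀ ⊆ f '' M := fun y hy => ⟨x y, Set.mem_image_of_mem x hy, hx y⟩
      exact Set.Countable.mono hsub (hc.image f)
    obtain ⟨Λ, hΛclosed, hΛsub, hMΛ, hΛloc⟩ := exists_condensation hMunc
    have hΛC : Λ ⊆ C n₀ := hΛsub.trans (closure_minimal hMC (hCclosed n₀))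
    have hΛW : Λ ⊆ f ⁻¹' W' := hΛC.trans (by rw [hCeq]; exact Set.subset_iUnion C n₀)
    refine ⟨Λ, ⟨hΛclosed, ?_⟩, ?_, ?_⟩
    · intro O hO hne
      have h1 := hΛloc O hO hne
      by_contra hfin
      rw [Set.not_infinite] at hfin
      refine h1 (Set.Countable.mono ?_ hfin.countable)
      intro z hz
      exact ⟨hz.1.1, hz.2⟩
    · exact le_antisymm (hW'null ▸ measure_mono hΛW) zero_le
    · set R' : Set Y := f '' (M ∩ Λ) with hR'
      have hR'sub : R' ⊆ f '' Λ := Set.image_mono Set.inter_subset_right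
      have hR'R : R' ⊆ R := by
        rintro _ ⟨z, ⟨⟨y, hy, rfl⟩, _⟩, rfl⟩
        rw [hx]
        exact hy.1
      have hR'unc : ¬ R'.Countable := by
        intro hc
        refine hMΛ ?_
        have hsub : M ∩ Λ ⊆ x '' R' := by
          rintro z ⟨⟨y, hy, rfl⟩, hzΛ⟩
          refine ⟨f (x y), ⟨x y, ⟨⟨y, hy, rfl⟩, hzΛ⟩, rfl⟩, ?_⟩
          rw [hx]
        exact Set.Countable.mono hsub (hc.image x)
      exact hausdorffM_pos_of_separated h hR'sub hR'unc hε
        (fun y hy y' hy' hne => hRsep y (hR'R hy) y' (hR'R hy') hne)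
end

section
/- Assume the Continuum Hypothesis (2^ℵ₀ = ℵ₁). Let (X, d, H^h) be a compact metric space satisfying property (H∞). Then there exists a set G ⊆ X such that: (a) the cardinality of G is 2^ℵ₀; (b) every subset E ⊆ G that is σ-finite with respect to H^h is countable; (c) G is not σ-finite with respect to H^h; (d) every subset of G is H^h-measurable. -/
open MeasureTheory Set Filter Topology
open scoped NNReal ENNReal

universe u v

/-- Proposition `BesicovitchMartin`, assumes CH. -/
theorem statement_17 {X : Type u} [MetricSpace X] [CompactSpace X]
    (CH : (2 : Cardinal.{u}) ^ Cardinal.aleph0 = Cardinal.aleph 1)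
    (h : ℝ≥0 → ℝ≥0∞) (hH : PropertyHInf (Set.univ : Set X) h) :
    ∃ G : Set X,
      Cardinal.mk G = 2 ^ Cardinal.aleph0 ∧
      (∀ E, E ⊆ G → SigmaFiniteSet (hausdorffM h) E → E.Countable) ∧
      ¬ SigmaFiniteSet (hausdorffM h) G ∧
      (∀ A, A ⊆ G → (hausdorffM h).IsCaratheodory A) := by
  classical
  obtain ⟨hPH, hns⟩ := hH
  letI : MeasurableSpace X := borel X
  haveI : BorelSpace X := ⟨rfl⟩
  set m : ℝ≥0∞ → ℝ≥0∞ := fun d => h d.toNNReal with hm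
  set μ : MeasureTheory.OuterMeasure X := hausdorffM h with hμ
  -- `μ` coincides with the Borel measure `Measure.mkMetric m` on all sets
  have hco : ∀ s : Set X, μ s = MeasureTheory.Measure.mkMetric m s := fun s =>
    congrFun (MeasureTheory.OuterMeasure.coe_mkMetric m) s
  -- Borel sets are Caratheodory
  have hcar : ∀ s : Set X, MeasurableSet s → μ.IsCaratheodory s := by
    intro s hs
    have hle := (MeasureTheory.OuterMeasure.mkMetric'_isMetric
      (fun t : Set X => m (EMetric.diam t))).le_caratheodory
    exact (MeasureTheory.OuterMeasure.isCaratheodory_iff μ).mp (hle s hs)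
  -- singletons are null
  have hsing : ∀ xx : X, μ {xx} = 0 := by
    intro xx
    refine le_antisymm ?_ zero_le
    rw [hco, MeasureTheory.Measure.mkMetric_apply]
    refine iSup₂_le fun r hr => ?_
    have hsub : ({xx} : Set X) ⊆ ⋃ _n : ℕ, ({xx} : Set X) :=
      Set.subset_iUnion (fun _ : ℕ => ({xx} : Set X)) 0
    have hdiam : ∀ _n : ℕ, EMetric.diam ({xx} : Set X) ≤ r := fun _ => by
      rw [show EMetric.diam ({xx} : Set X) = 0 from EMetric.diam_singleton]; exact zero_le
    refine le_trans (iInf_le_of_le (fun _ => {xx})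
      (iInf_le_of_le hsub (iInf_le_of_le hdiam le_rfl))) ?_
    have hm0 : m (EMetric.diam ({xx} : Set X)) = 0 := by
      rw [show EMetric.diam ({xx} : Set X) = 0 from EMetric.diam_singleton]
      simpa [hm] using hPH.zero
    simp [hm0, hm, hPH.zero]
  -- countable sets are null
  have hnull : ∀ s : Set X, s.Countable → μ s = 0 := by
    intro s hs
    have hrw : s = ⋃ xx ∈ s, {xx} := (Set.biUnion_of_singleton s).symm
    rw [hrw]
    exact (measure_biUnion_null_iff hs).mpr fun xx _ => hsing xx
  -- no countable family of finite-measure Caratheodory sets covers `X`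
  have key : ∀ 𝒞 : Set (Set X), 𝒞.Countable →
      (∀ s ∈ 𝒞, μ.IsCaratheodory s ∧ μ s < ⊤) → ⋃₀ 𝒞 ≠ Set.univ := by
    intro 𝒞 hc hmem hU
    apply hns
    obtain ⟨f, hf⟩ := (hc.insert ∅).exists_eq_range (Set.insert_nonempty _ _)
    refine ⟨f, fun n => ?_, ?_⟩
    · have hfn : f n ∈ insert ∅ 𝒞 := hf ▸ Set.mem_range_self n
      rcases Set.mem_insert_iff.mp hfn with h0 | hmem'
      · rw [h0]
        exact ⟨MeasureTheory.OuterMeasure.isCaratheodory_empty μ, by simp⟩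
      · exact hmem _ hmem'
    · have h2 : ⋃ n, f n = ⋃₀ 𝒞 := by
        rw [← Set.sUnion_range, ← hf, Set.sUnion_insert, Set.empty_union]
      rw [← hU]
      exact h2.symm
  -- measurable hulls
  have hull : ∀ s : Set X, ∃ t, s ⊆ t ∧ MeasurableSet t ∧ μ t = μ s := by
    intro s
    obtain ⟨t, hst, htm, hts⟩ :=
      MeasureTheory.exists_measurable_superset (MeasureTheory.Measure.mkMetric m) s
    exact ⟨t, hst, htm, by rw [hco, hco, hts]⟩
  -- cardinality of the Borel σ-algebra
  obtain ⟨b, hbc, -, hbasis⟩ := TopologicalSpace.exists_countable_basis X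
  have hborel : (borel X : MeasurableSpace X) = MeasurableSpace.generateFrom b :=
    hbasis.borel_eq_generateFrom
  have hcard : Cardinal.mk {t : Set X | MeasurableSet t} ≤ Cardinal.continuum := by
    have hble : Cardinal.mk b ≤ Cardinal.continuum :=
      hbc.le_aleph0.trans Cardinal.aleph0_le_continuum
    have := MeasurableSpace.cardinal_measurableSet_le_continuum (α := X) (s := b) hble
    have heq : {t : Set X | MeasurableSet t}
        = {t : Set X | @MeasurableSet X (MeasurableSpace.generateFrom b) t} := by
      ext t
      change @MeasurableSet X (borel X) t ↔ _
      rw [hborel]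
      exact Iff.rfl
    rw [heq]
    exact this
  -- the family of finite-measure Borel sets, enumerated by ω₁
  set 𝓕 : Set (Set X) := {s | MeasurableSet s ∧ μ s < ⊤} with h𝓕
  set ι := (Cardinal.aleph 1).ord.ToType with hιdef
  have hι : Cardinal.mk ι = Cardinal.aleph 1 := Cardinal.mk_ord_toType _
  have h𝓕card : Cardinal.mk 𝓕 ≤ Cardinal.mk ι := by
    rw [hι]
    refine le_trans (Cardinal.mk_le_mk_of_subset fun s hs => hs.1) (hcard.trans ?_)
    rw [← CH, Cardinal.two_power_aleph0]
  haveI hne𝓕 : Nonempty 𝓕 := ⟨⟨∅, MeasurableSet.empty, by simp⟩⟩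
  obtain ⟨g⟩ := Cardinal.le_def _ _ |>.mp h𝓕card
  set F : ι → 𝓕 := Function.invFun g with hF
  have hFsurj : Function.Surjective F := Function.invFun_surjective g.injective
  -- initial segments are countable
  have hIio : ∀ i : ι, (Set.Iio i).Countable := fun i =>
    (Cardinal.countable_iff_lt_aleph_one _).mpr
      ((Cardinal.mk_Iio_lt i (by rw [hι]; exact (Ordinal.type_toType _).symm)).trans_eq hι)
  have hIic : ∀ i : ι, (Set.Iic i).Countable := fun i => by
    rw [← Set.Iio_union_right]
    exact (hIio i).union (Set.countable_singleton i)
  -- the recursive step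
  have step : ∀ (i : ι) (prev : ∀ j, j < i → X),
      ∃ xx : X, (∀ j, j ≤ i → xx ∉ (F j : Set X)) ∧
        ∀ (j) (hj : j < i), xx ≠ prev j hj := by
    intro i prev
    set 𝒞 : Set (Set X) :=
      ((fun j : ι => (F j : Set X)) '' Set.Iic i) ∪
        (Set.range fun p : Set.Iio i => ({prev p.1 p.2} : Set X)) with h𝒞
    have hc : 𝒞.Countable := by
      refine ((hIic i).image _).union ?_
      haveI := (hIio i).to_subtype
      exact Set.countable_range _
    have hmem : ∀ s ∈ 𝒞, μ.IsCaratheodory s ∧ μ s < ⊤ := by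
      rintro s (⟨j, _hj, rfl⟩ | ⟨p, rfl⟩)
      · exact ⟨hcar _ (F j).2.1, (F j).2.2⟩
      · exact ⟨hcar _ (measurableSet_singleton _), by rw [hsing]; exact ENNReal.zero_lt_top⟩
    obtain ⟨xx, hx⟩ := (Set.ne_univ_iff_exists_notMem _).mp (key 𝒞 hc hmem)
    refine ⟨xx, fun j hj hxF => hx ?_, fun j hj hxe => hx ?_⟩
    · exact ⟨(F j : Set X), Or.inl ⟨j, hj, rfl⟩, hxF⟩
    · exact ⟨{prev j hj}, Or.inr ⟨⟨j, hj⟩, rfl⟩, by rw [hxe]; exact Set.mem_singleton _⟩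
  -- the transfinite construction
  set recF : ∀ i : ι, (∀ j, j < i → X) → X :=
    fun i prev => Classical.choose (step i prev) with hrecF
  set x : ι → X := WellFounded.fix wellFounded_lt recF with hx
  have hxspec : ∀ i : ι, (∀ j, j ≤ i → x i ∉ (F j : Set X)) ∧
      ∀ j, j < i → x i ≠ x j := by
    intro i
    have heq : x i = recF i fun j _ => x j := WellFounded.fix_eq wellFounded_lt recF i
    have hspec := Classical.choose_spec (step i fun j _ => x j)
    exact ⟨fun j hj => heq ▸ hspec.1 j hj, fun j hj => heq ▸ hspec.2 j hj⟩
  have hxinj : Function.Injective x := by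
    intro a bb hab
    rcases lt_trichotomy a bb with hlt | he | hlt
    · exact absurd hab.symm ((hxspec bb).2 a hlt)
    · exact he
    · exact absurd hab ((hxspec a).2 bb hlt)
  -- the key countability property of `G = range x`
  have hcount : ∀ s : Set X, MeasurableSet s → μ s < ⊤ → (Set.range x ∩ s).Countable := by
    intro s hsm hsf
    obtain ⟨i, hi⟩ := hFsurj ⟨s, hsm, hsf⟩
    have hFi : (F i : Set X) = s := by rw [hi]
    have hsub : Set.range x ∩ s ⊆ x '' Set.Iic i := by
      rintro y ⟨⟨j, rfl⟩, hys⟩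
      refine ⟨j, ?_, rfl⟩
      by_contra hj
      rw [Set.mem_Iic, not_le] at hj
      exact (hxspec j).1 i hj.le (hFi.symm ▸ hys)
    exact (((hIic i).image x).mono hsub)
  -- conclusion
  have hb : ∀ E, E ⊆ Set.range x → SigmaFiniteSet μ E → E.Countable := by
    rintro E hEG ⟨A, hA, hAE⟩
    choose B hB hBm hBμ using fun n => hull (A n)
    have hsub : E ⊆ ⋃ n, (Set.range x ∩ B n) := by
      intro y hy
      have hy' := hy
      rw [hAE] at hy'
      obtain ⟨n, hn⟩ := Set.mem_iUnion.mp hy'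
      exact Set.mem_iUnion.mpr ⟨n, hEG hy, hB n hn⟩
    refine Set.Countable.mono hsub (Set.countable_iUnion fun n => hcount (B n) (hBm n) ?_)
    rw [hBμ n]
    exact (hA n).2
  refine ⟨Set.range x, ?_, hb, ?_, ?_⟩
  · rw [Cardinal.mk_range_eq x hxinj, hι, CH]
  · intro hsf
    have hcnt : (Set.range x).Countable := hb _ Set.Subset.rfl hsf
    have hle : Cardinal.mk (Set.range x) ≤ Cardinal.aleph0 := hcnt.le_aleph0
    rw [Cardinal.mk_range_eq x hxinj, hι] at hle
    exact absurd hle (by rw [← CH]; exact (Cardinal.cantor _).not_ge)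
  · intro A hA
    refine (MeasureTheory.OuterMeasure.isCaratheodory_iff_le' μ).mpr fun t => ?_
    rcases eq_top_or_lt_top (μ t) with ht | ht
    · rw [ht]; exact le_top
    · obtain ⟨B, htB, hBm, hBμ⟩ := hull t
      have h1 : μ (t ∩ A) = 0 := by
        have hsub2 : t ∩ A ⊆ Set.range x ∩ B := fun y hy => ⟨hA hy.2, htB hy.1⟩
        exact measure_mono_null hsub2 (hnull _ (hcount B hBm (by rw [hBμ]; exact ht)))
      rw [h1, zero_add]
      exact measure_mono Set.diff_subset
end

section
/- Assume the Continuum Hypothesis (2^ℵ₀ = ℵ₁). Let (X, d, H^h) be a compact metric space satisfying property (H∞). Let (Y, ν) be a measure space with |Y| = 2^ℵ₀ such that every singleton in Y has ν-measure zero. Then there exists a surjection f : X → Y such that f⁻¹(S) is H^h-measurable for every S ⊆ Y, and such that whenever N ⊆ X is σ-finite with respect to H^h, one has ν(f(N)) = 0. -/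
open MeasureTheory Set Filter Topology
open scoped NNReal ENNReal

universe u v

/-- Auxiliary: a union of Carathéodory sets over a countable index set is Carathéodory. -/
private lemma carath_biUnion {Z : Type*} (μ : MeasureTheory.OuterMeasure Z) {ι : Type*}
    {t : Set ι} (ht : t.Countable) {A : ι → Set Z}
    (hA : ∀ i ∈ t, μ.IsCaratheodory (A i)) : μ.IsCaratheodory (⋃ i ∈ t, A i) := by
  rcases t.eq_empty_or_nonempty with rfl | hne
  · simp [MeasureTheory.OuterMeasure.isCaratheodory_empty]
  · obtain ⟨φ, hφ⟩ := ht.exists_eq_range hne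
    have hre : (⋃ i ∈ t, A i) = ⋃ n, A (φ n) := by
      rw [hφ, Set.biUnion_range]
    rw [hre]
    exact μ.isCaratheodory_iUnion fun n => hA _ (by rw [hφ]; exact Set.mem_range_self n)

/-- Theorem `BesiSF`, assumes CH. -/
theorem statement_18 {X : Type u} [MetricSpace X] [CompactSpace X] {Y : Type u}
    (CH : (2 : Cardinal.{u}) ^ Cardinal.aleph0 = Cardinal.aleph 1)
    (h : ℝ≥0 → ℝ≥0∞) (hH : PropertyHInf (Set.univ : Set X) h)
    (ν : MeasureTheory.OuterMeasure Y)
    (hY : Cardinal.mk Y = 2 ^ Cardinal.aleph0)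
    (hatoms : ∀ y : Y, ν {y} = 0) :
    ∃ f : X → Y, Function.Surjective f ∧
      (∀ S : Set Y, (hausdorffM h).IsCaratheodory (f ⁻¹' S)) ∧
      ∀ N : Set X, SigmaFiniteSet (hausdorffM h) N → ν (f '' N) = 0 := by
  classical
  borelize X
  obtain ⟨hPH, hnsf⟩ := hH
  set μ : MeasureTheory.OuterMeasure X := hausdorffM h with hμdef
  -- basic facts about μ
  have hmetric : μ.IsMetric := MeasureTheory.OuterMeasure.mkMetric'_isMetric _
  have hcarath_meas : ∀ s : Set X, MeasurableSet s → μ.IsCaratheodory s := by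
    intro s hs
    have hb : MeasurableSet[borel X] s := by
      rwa [← BorelSpace.measurable_eq (α := X)]
    exact (MeasureTheory.OuterMeasure.isCaratheodory_iff μ).mp
      (hmetric.borel_le_caratheodory s hb)
  have htrim : μ.trim = μ := MeasureTheory.OuterMeasure.trim_mkMetric _
  have hull : ∀ s : Set X, ∃ t, s ⊆ t ∧ MeasurableSet t ∧ μ t = μ s := by
    intro s
    obtain ⟨t, hst, htm, hts⟩ := μ.exists_measurable_superset_eq_trim s
    exact ⟨t, hst, htm, by rw [hts, htrim]⟩
  have hsing : ∀ x : X, μ {x} = 0 := by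
    intro x
    have key : μ {x} ≤ h ((EMetric.diam ({x} : Set X)).toNNReal) := by
      show MeasureTheory.OuterMeasure.mkMetric'
        (fun s : Set X => h (EMetric.diam s).toNNReal) {x} ≤ _
      rw [MeasureTheory.OuterMeasure.mkMetric']
      simp only [MeasureTheory.OuterMeasure.iSup_apply]
      exact iSup₂_le fun r hr =>
        MeasureTheory.OuterMeasure.mkMetric'.pre_le (by simp)
    simpa [hPH.zero, EMetric.diam] using key
  -- the family of measurable sets of finite measure
  set ℬ : Set (Set X) := {B | MeasurableSet B ∧ μ B < ⊤} with hBdef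
  have hBne : (∅ : Set X) ∈ ℬ := ⟨MeasurableSet.empty, by simp⟩
  have hsingB : ∀ x : X, {x} ∈ ℬ := fun x =>
    ⟨isClosed_singleton.measurableSet, by rw [hsing x]; exact ENNReal.zero_lt_top⟩
  have hcardB : Cardinal.mk ↥ℬ ≤ Cardinal.aleph 1 := by
    obtain ⟨b, hbc, _, hbb⟩ := TopologicalSpace.exists_countable_basis X
    have hb2 : Cardinal.mk ↥{t : Set X | @MeasurableSet X (MeasurableSpace.generateFrom b) t}
        ≤ Cardinal.continuum :=
      MeasurableSpace.cardinal_measurableSet_le_continuum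
        (hbc.le_aleph0.trans Cardinal.aleph0_le_continuum)
    have hgen : ‹MeasurableSpace X› = MeasurableSpace.generateFrom b := by
      rw [BorelSpace.measurable_eq (α := X)]; exact hbb.borel_eq_generateFrom
    rw [← hgen] at hb2
    have h1 : Cardinal.mk ↥ℬ ≤ Cardinal.mk ↥{t : Set X | MeasurableSet t} :=
      Cardinal.mk_le_mk_of_subset fun B hB => hB.1
    refine (h1.trans hb2).trans ?_
    rw [← Cardinal.two_power_aleph0, CH]
  -- the ordinal index
  set Θ : Ordinal.{u} := (Cardinal.aleph 1).ord with hΘdef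
  have hcardΛ : Cardinal.mk ↥(Set.Iio Θ) = Cardinal.lift.{u+1} (Cardinal.aleph.{u} 1) := by
    rw [Ordinal.mk_Iio_ordinal, Cardinal.card_ord]
  have hemb : Nonempty (↥ℬ ↪ ↥(Set.Iio Θ)) := by
    rw [← Cardinal.lift_mk_le']
    rw [hcardΛ, Cardinal.lift_lift]
    exact (Cardinal.lift_le.mpr hcardB).trans le_rfl
  obtain ⟨i⟩ := hemb
  haveI : Nonempty ↥ℬ := ⟨⟨∅, hBne⟩⟩
  have hesurj : Function.Surjective (Function.invFun i) :=
    Function.invFun_surjective i.injective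
  set M : Ordinal.{u} → Set X :=
    fun o => if ho : o < Θ then ((Function.invFun i ⟨o, ho⟩ : ↥ℬ) : Set X) else ∅ with hMdef
  have hM : ∀ o, MeasurableSet (M o) ∧ μ (M o) < ⊤ := by
    intro o
    by_cases ho : o < Θ
    · simp only [hMdef, dif_pos ho]
      exact (Function.invFun i ⟨o, ho⟩).2
    · simp only [hMdef, dif_neg ho]
      exact ⟨MeasurableSet.empty, by simp⟩
  have hMexists : ∀ B ∈ ℬ, ∃ o, o < Θ ∧ M o = B := by
    intro B hB
    obtain ⟨⟨o, ho⟩, heq⟩ := hesurj ⟨B, hB⟩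
    refine ⟨o, ho, ?_⟩
    show (if ho : o < Θ then ((Function.invFun i ⟨o, ho⟩ : ↥ℬ) : Set X) else ∅) = B
    exact (dif_pos ho).trans (congrArg Subtype.val heq)
  -- the rank function
  have hαne : ∀ x : X, {o : Ordinal.{u} | x ∈ M o}.Nonempty := by
    intro x
    obtain ⟨o, _, hMo⟩ := hMexists {x} (hsingB x)
    exact ⟨o, by rw [Set.mem_setOf_eq, hMo]; exact Set.mem_singleton x⟩
  set αf : X → Ordinal.{u} := fun x => sInf {o | x ∈ M o} with hαdef
  have hmemM : ∀ x, x ∈ M (αf x) := fun x => csInf_mem (hαne x)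
  have hαle : ∀ {x o}, x ∈ M o → αf x ≤ o := fun hx =>
    csInf_le (OrderBot.bddBelow _) hx
  have hαlt : ∀ x, αf x < Θ := by
    intro x
    obtain ⟨o, ho, hMo⟩ := hMexists {x} (hsingB x)
    exact lt_of_le_of_lt (hαle (by rw [hMo]; exact Set.mem_singleton x)) ho
  have hnotmem : ∀ x o, o < αf x → x ∉ M o := fun x o holt hx =>
    absurd (hαle hx) (not_le.mpr holt)
  -- countability of initial segments
  have hIio_ctble : ∀ o < Θ, (Set.Iio o).Countable := by
    intro o ho
    refine (Cardinal.countable_iff_lt_aleph_one _).mpr ?_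
    rw [Ordinal.mk_Iio_ordinal]
    calc Cardinal.lift.{u+1} o.card
        < Cardinal.lift.{u+1} (Cardinal.aleph.{u} 1) :=
          Cardinal.lift_lt.mpr (Cardinal.lt_ord.mp ho)
      _ = Cardinal.aleph 1 := by rw [Cardinal.lift_aleph, Ordinal.lift_one]
  have hIic_ctble : ∀ o < Θ, (Set.Iic o).Countable := by
    intro o ho
    refine Set.Countable.mono ?_ ((hIio_ctble o ho).insert o)
    intro p hp
    rcases eq_or_lt_of_le (Set.mem_Iic.mp hp) with rfl | hlt
    · exact Set.mem_insert _ _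
    · exact Set.mem_insert_iff.mpr (Or.inr hlt)
  -- fibers of αf are Carathéodory
  have hfiber_eq : ∀ o, αf ⁻¹' {o} = M o \ ⋃ p ∈ Set.Iio o, M p := by
    intro o
    ext x
    constructor
    · intro hx
      have hxo : αf x = o := hx
      refine ⟨hxo ▸ hmemM x, ?_⟩
      simp only [Set.mem_iUnion, not_exists]
      intro p hp
      exact hnotmem x p (hxo ▸ hp)
    · rintro ⟨hxM, hxU⟩
      simp only [Set.mem_iUnion, not_exists] at hxU
      have h1 : αf x ≤ o := hαle hxM
      rcases eq_or_lt_of_le h1 with heq | hlt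
      · exact heq
      · exact absurd (hmemM x) (hxU _ hlt)
  have hfiber_carath : ∀ o, μ.IsCaratheodory (αf ⁻¹' {o}) := by
    intro o
    rcases lt_or_ge o Θ with ho | ho
    · rw [hfiber_eq o]
      exact μ.isCaratheodory_diff (hcarath_meas _ (hM o).1)
        (carath_biUnion μ (hIio_ctble o ho) fun p _ => hcarath_meas _ (hM p).1)
    · have hempty : αf ⁻¹' {o} = ∅ := by
        ext x
        simp only [Set.mem_preimage, Set.mem_singleton_iff, Set.mem_empty_iff_false,
          iff_false]
        exact fun hx => absurd (hx ▸ hαlt x) (not_lt.mpr ho)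
      rw [hempty]
      exact μ.isCaratheodory_empty
  -- preimages of arbitrary sets of ordinals under αf are Carathéodory
  have hpreT : ∀ T : Set Ordinal.{u}, μ.IsCaratheodory (αf ⁻¹' T) := by
    intro T
    rw [MeasureTheory.OuterMeasure.isCaratheodory_iff_le']
    intro t
    by_cases htop : μ t = ⊤
    · rw [htop]; exact le_top
    obtain ⟨B, htB, hBm, hBμ⟩ := hull t
    have hBfin : μ B < ⊤ := by rw [hBμ]; exact Ne.lt_top htop
    obtain ⟨β, hβΘ, hβ⟩ := hMexists B ⟨hBm, hBfin⟩
    have hαβ : ∀ x ∈ t, αf x ≤ β := fun x hx => hαle (by rw [hβ]; exact htB hx)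
    set A' : Set X := αf ⁻¹' (T ∩ Set.Iic β) with hA'def
    have hA'c : μ.IsCaratheodory A' := by
      have hre : A' = ⋃ p ∈ T ∩ Set.Iic β, αf ⁻¹' {p} := by
        ext x
        simp only [hA'def, Set.mem_preimage, Set.mem_iUnion, Set.mem_singleton_iff,
          exists_prop]
        exact ⟨fun hx => ⟨αf x, hx, rfl⟩, by rintro ⟨p, hp, rfl⟩; exact hp⟩
      rw [hre]
      exact carath_biUnion μ ((hIic_ctble β hβΘ).mono Set.inter_subset_right)
        fun p _ => hfiber_carath p
    have k1 : t ∩ (αf ⁻¹' T) = t ∩ A' := by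
      ext x
      simp only [Set.mem_inter_iff, Set.mem_preimage, hA'def, Set.mem_inter_iff]
      exact ⟨fun ⟨hxt, hxT⟩ => ⟨hxt, hxT, hαβ x hxt⟩, fun ⟨hxt, hxT, _⟩ => ⟨hxt, hxT⟩⟩
    have k2 : t \ (αf ⁻¹' T) = t \ A' := by
      ext x
      constructor
      · rintro ⟨hxt, hxT⟩
        exact ⟨hxt, fun hx => hxT (Set.mem_preimage.mpr (Set.mem_preimage.mp hx).1)⟩
      · rintro ⟨hxt, hxA⟩
        exact ⟨hxt, fun hxT => hxA (Set.mem_preimage.mpr ⟨hxT, hαβ x hxt⟩)⟩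
    rw [k1, k2]
    exact le_of_eq (hA'c t).symm
  -- the range of αf is uncountable
  set S : Set Ordinal.{u} := Set.range αf with hSdef
  have hcover : (Set.univ : Set X) = ⋃ o ∈ S, M o := by
    refine (Set.univ_subset_iff.mp fun x _ => ?_).symm
    exact Set.mem_biUnion (Set.mem_range_self x) (hmemM x)
  have huncount : ¬ S.Countable := by
    intro hc
    apply hnsf
    show SigmaFiniteSet μ Set.univ
    rcases S.eq_empty_or_nonempty with hS | hS
    · have huniv : (Set.univ : Set X) = ∅ := by rw [hcover, hS]; simp
      exact ⟨fun _ => ∅, fun n => ⟨μ.isCaratheodory_empty, by simp⟩,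
        by rw [huniv, Set.iUnion_empty]⟩
    · obtain ⟨φ, hφ⟩ := hc.exists_eq_range hS
      exact ⟨fun n => M (φ n), fun n => ⟨hcarath_meas _ (hM _).1, (hM _).2⟩,
        by rw [hcover, hφ, Set.biUnion_range]⟩
  have hSsub : S ⊆ Set.Iio Θ := by
    rintro o ⟨x, rfl⟩
    exact hαlt x
  have hcardS : Cardinal.mk ↥S = Cardinal.lift.{u+1} (Cardinal.aleph.{u} 1) := by
    refine le_antisymm ((Cardinal.mk_le_mk_of_subset hSsub).trans hcardΛ.le) ?_
    have h1 : ¬ (Cardinal.mk ↥S < Cardinal.aleph 1) := by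
      rw [← Cardinal.countable_iff_lt_aleph_one]
      exact huncount
    rw [Cardinal.lift_aleph, Ordinal.lift_one]
    exact not_lt.mp h1
  -- build the bijection to Y
  have hequiv : Nonempty (↥S ≃ Y) := by
    rw [← Cardinal.lift_mk_eq']
    rw [hcardS, hY, CH, Cardinal.lift_lift]
  obtain ⟨g⟩ := hequiv
  refine ⟨fun x => g ⟨αf x, Set.mem_range_self x⟩, ?_, ?_, ?_⟩
  · -- surjectivity
    intro y
    obtain ⟨x, hx⟩ := (g.symm y).2
    refine ⟨x, ?_⟩
    show g ⟨αf x, Set.mem_range_self x⟩ = y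
    rw [show (⟨αf x, Set.mem_range_self x⟩ : ↥S) = g.symm y from Subtype.ext hx,
      Equiv.apply_symm_apply]
  · -- preimages are Carathéodory
    intro S'
    have hpre : (fun x => g ⟨αf x, Set.mem_range_self x⟩) ⁻¹' S'
        = αf ⁻¹' (Subtype.val '' (g ⁻¹' S')) := by
      ext x
      simp only [Set.mem_preimage, Set.mem_image]
      constructor
      · intro hx
        exact ⟨⟨αf x, Set.mem_range_self x⟩, hx, rfl⟩
      · rintro ⟨s, hs, hval⟩
        have : s = ⟨αf x, Set.mem_range_self x⟩ := Subtype.ext hval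
        rwa [this] at hs
    rw [hpre]
    exact hpreT _
  · -- σ-finite sets have null image
    intro N hN
    obtain ⟨A, hA, hNeq⟩ := hN
    have hAfin : ∀ n, ∃ β, β < Θ ∧ A n ⊆ M β := by
      intro n
      obtain ⟨B, hAB, hBm, hBμ⟩ := hull (A n)
      have hBfin : μ B < ⊤ := by rw [hBμ]; exact (hA n).2
      obtain ⟨β, hβΘ, hβ⟩ := hMexists B ⟨hBm, hBfin⟩
      exact ⟨β, hβΘ, by rw [hβ]; exact hAB⟩
    choose βs hβlt hβsub using hAfin
    set γ : Ordinal.{u} := ⨆ n, βs n with hγdef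
    have hγΘ : γ < Θ := by
      refine Ordinal.iSup_lt_ord_lift ?_ hβlt
      rw [Cardinal.mk_nat, Cardinal.lift_aleph0, Cardinal.isRegular_aleph_one.cof_eq]
      exact Cardinal.aleph0_lt_aleph_one
    have hβγ : ∀ n, βs n ≤ γ := Ordinal.le_iSup βs
    set C0 : Set Y := g '' (Subtype.val ⁻¹' Set.Iic γ) with hC0def
    have hC0c : C0.Countable :=
      (((hIic_ctble γ hγΘ).preimage Subtype.val_injective).image g)
    have hνC0 : ν C0 = 0 := by
      have hre : C0 = ⋃ y ∈ C0, ({y} : Set Y) := (Set.biUnion_of_singleton C0).symm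
      rw [hre]
      exact (measure_biUnion_null_iff hC0c).mpr fun y _ => hatoms y
    refine measure_mono_null ?_ hνC0
    rintro _ ⟨x, hxN, rfl⟩
    rw [hNeq] at hxN
    obtain ⟨n, hxn⟩ := Set.mem_iUnion.mp hxN
    have hαγ : αf x ≤ γ := (hαle (hβsub n hxn)).trans (hβγ n)
    exact ⟨⟨αf x, Set.mem_range_self x⟩, hαγ, rfl⟩
end
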